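/- arXiv:2410.22687 — 7 statements merged into one kernel-verified Lean document; each statement's English description precedes it below -/
import Mathlib

section
/- Analogue of Krasner's lemma: let α ∈ K and let α = α₁, α₂, …, α_n be the distinct Galois conjugates of α over ℚ (i.e., the images of α under Gal(K/ℚ)). Suppose β ∈ K satisfies d(α, β) < (1/2)·d(α, α_i) for every i = 2, …, n. Then ℚ(α) ⊆ ℚ(β) (as subfields of K). -/
/-- The cyclotomic norm: `‖α‖ = √(Σ_{j=1}^{p−1} Tr(α·ω^j)²)`. -/
noncomputable def cycNorm (p : ℕ) {K : Type*} [Field K] [Algebra ℚ K] (ω : K) (α : K) : ℝ :=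
  Real.sqrt (∑ j ∈ Finset.Icc 1 (p - 1), ((Algebra.trace ℚ K (α * ω ^ j) : ℚ) : ℝ) ^ 2)

/-- The metric induced by the cyclotomic norm: `d(α, β) = ‖α − β‖`. -/
noncomputable def cycDist (p : ℕ) {K : Type*} [Field K] [Algebra ℚ K] (ω : K) (α β : K) : ℝ :=
  cycNorm p ω (α - β)

section aux

variable {K : Type*} [Field K] [Algebra ℚ K]

/-- The vector of traces, as an element of Euclidean space. -/
noncomputable def cycVec (p : ℕ) (ω : K) (α : K) :
    EuclideanSpace ℝ (Finset.Icc 1 (p - 1) : Finset ℕ) :=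
  WithLp.toLp 2 (fun j => ((Algebra.trace ℚ K (α * ω ^ (j : ℕ)) : ℚ) : ℝ))

lemma cycNorm_eq_norm_cycVec (p : ℕ) (ω : K) (α : K) :
    cycNorm p ω α = ‖cycVec p ω α‖ := by
  rw [EuclideanSpace.norm_eq, cycNorm]
  congr 1
  rw [← Finset.sum_attach (Finset.Icc 1 (p - 1))
    (fun j => ((Algebra.trace ℚ K (α * ω ^ j) : ℚ) : ℝ) ^ 2)]
  refine Finset.sum_congr rfl fun j _ => ?_
  rw [Real.norm_eq_abs, sq_abs]
  rfl

lemma cycVec_sub (p : ℕ) (ω : K) (α β : K) :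
    cycVec p ω (α - β) = cycVec p ω α - cycVec p ω β := by
  ext j
  simp only [cycVec, PiLp.sub_apply, PiLp.toLp_apply, Pi.sub_apply, sub_mul, map_sub, Rat.cast_sub]

lemma pow_mod_of_pow_eq_one {ω : K} {p : ℕ} (h1 : ω ^ p = 1) (m : ℕ) :
    ω ^ m = ω ^ (m % p) := by
  conv_lhs => rw [← Nat.mod_add_div m p]
  rw [pow_add, pow_mul, h1, one_pow, mul_one]

/-- reindexing a sum over `Icc 1 (p-1)` by multiplication by a unit of `ZMod p`. -/
lemma sum_Icc_mul_unit (p : ℕ) (hp : p.Prime) (G : ZMod p → ℝ) (u : (ZMod p)ˣ) :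
    ∑ j ∈ Finset.Icc 1 (p - 1), G ((j : ZMod p) * u) =
      ∑ j ∈ Finset.Icc 1 (p - 1), G (j : ZMod p) := by
  haveI : NeZero p := ⟨hp.ne_zero⟩
  have hcastval : ∀ a : ZMod p, ((a.val : ℕ) : ZMod p) = a := fun a => by
    have := ZMod.natCast_val (n := p) (R := ZMod p) a
    rwa [ZMod.cast_id] at this
  have hmem : ∀ j ∈ Finset.Icc 1 (p - 1), ∀ v : (ZMod p)ˣ,
      ((j : ZMod p) * v).val ∈ Finset.Icc 1 (p - 1) := by
    intro j hj v
    rw [Finset.mem_Icc] at hj ⊢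
    have hjp : j < p := lt_of_le_of_lt hj.2 (Nat.sub_lt hp.pos one_pos)
    have hj0 : (j : ZMod p) ≠ 0 := by
      intro hc
      have := ZMod.val_natCast (n := p) j
      rw [hc, ZMod.val_zero, Nat.mod_eq_of_lt hjp] at this
      omega
    have hne : ((j : ZMod p) * v) ≠ 0 := fun hc => hj0 ((Units.mul_left_eq_zero v).mp hc)
    have hval0 : ((j : ZMod p) * v).val ≠ 0 := by
      intro hc
      apply hne
      have := hcastval ((j : ZMod p) * v)
      rw [hc, Nat.cast_zero] at this
      exact this.symm
    have hlt : ((j : ZMod p) * v).val < p := ZMod.val_lt _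
    omega
  refine Finset.sum_nbij' (fun j => ((j : ZMod p) * u).val)
    (fun j => ((j : ZMod p) * u⁻¹).val)
    (fun j hj => hmem j hj u) (fun j hj => hmem j hj u⁻¹) ?_ ?_ ?_
  · intro j hj
    simp only [hcastval, mul_assoc, ← Units.val_mul, mul_inv_cancel, Units.val_one, mul_one]
    rw [Finset.mem_Icc] at hj
    exact ZMod.val_cast_of_lt (lt_of_le_of_lt hj.2 (Nat.sub_lt hp.pos one_pos))
  · intro j hj
    simp only [hcastval, mul_assoc, ← Units.val_mul, inv_mul_cancel, Units.val_one, mul_one]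
    rw [Finset.mem_Icc] at hj
    exact ZMod.val_cast_of_lt (lt_of_le_of_lt hj.2 (Nat.sub_lt hp.pos one_pos))
  · intro j hj
    simp only [hcastval]

/-- The cyclotomic norm is invariant under the Galois action. -/
lemma cycNorm_algEquiv (p : ℕ) (hp : p.Prime) {K : Type*} [Field K] [Algebra ℚ K]
    (ω : K) (hω : IsPrimitiveRoot ω p) (σ : K ≃ₐ[ℚ] K) (x : K) :
    cycNorm p ω (σ x) = cycNorm p ω x := by
  haveI : NeZero p := ⟨hp.ne_zero⟩
  -- σ⁻¹ ω = ω ^ k for some k coprime to p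
  have hω' : IsPrimitiveRoot (σ.symm ω) p :=
    hω.map_of_injective σ.symm.injective
  obtain ⟨k, hkp, hk, hωk⟩ := (hω.isPrimitiveRoot_iff).mp hω'
  set u : (ZMod p)ˣ := ZMod.unitOfCoprime k hk with hu
  have hucoe : (u : ZMod p) = (k : ZMod p) := rfl
  have key : ∀ j : ℕ, Algebra.trace ℚ K (σ x * ω ^ j) =
      Algebra.trace ℚ K (x * ω ^ (((j : ZMod p) * u).val)) := by
    intro j
    have h1 : σ x * ω ^ j = σ (x * σ.symm (ω ^ j)) := by
      rw [map_mul, AlgEquiv.apply_symm_apply]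
    rw [h1, Algebra.trace_eq_of_algEquiv]
    congr 1
    rw [map_pow, ← hωk, ← pow_mul]
    rw [pow_mod_of_pow_eq_one hω.pow_eq_one (k * j)]
    congr 1
    have : ((j : ZMod p) * u) = ((k * j : ℕ) : ZMod p) := by
      push_cast [hucoe]; ring
    rw [this, ZMod.val_natCast]
  unfold cycNorm
  congr 1
  calc ∑ j ∈ Finset.Icc 1 (p - 1), ((Algebra.trace ℚ K (σ x * ω ^ j) : ℚ) : ℝ) ^ 2
      = ∑ j ∈ Finset.Icc 1 (p - 1),
        (fun a : ZMod p => ((Algebra.trace ℚ K (x * ω ^ a.val) : ℚ) : ℝ) ^ 2) ((j : ZMod p) * u) := by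
        refine Finset.sum_congr rfl fun j _ => ?_
        rw [key j]
    _ = ∑ j ∈ Finset.Icc 1 (p - 1),
        (fun a : ZMod p => ((Algebra.trace ℚ K (x * ω ^ a.val) : ℚ) : ℝ) ^ 2) ((j : ZMod p)) :=
        sum_Icc_mul_unit p hp (fun a : ZMod p => ((Algebra.trace ℚ K (x * ω ^ a.val) : ℚ) : ℝ) ^ 2) u
    _ = ∑ j ∈ Finset.Icc 1 (p - 1), ((Algebra.trace ℚ K (x * ω ^ j) : ℚ) : ℝ) ^ 2 := by
        refine Finset.sum_congr rfl fun j hj => ?_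
        rw [Finset.mem_Icc] at hj
        have hjp : j < p := lt_of_le_of_lt hj.2 (Nat.sub_lt hp.pos one_pos)
        simp only
        rw [ZMod.val_natCast, Nat.mod_eq_of_lt hjp]

end aux

/-- Analogue of Krasner's lemma: if `β` is closer to `α` than half the distance from `α`
to each of its nontrivial Galois conjugates, then `ℚ(α) ⊆ ℚ(β)`. -/
theorem stmt3 (p : ℕ+) (hp : (p : ℕ).Prime) (hodd : Odd (p : ℕ))
    (K : Type*) [Field K] [Algebra ℚ K] [IsCyclotomicExtension {(p : ℕ)} ℚ K]
    (ω : K) (hω : IsPrimitiveRoot ω p) (α β : K)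
    (h : ∀ σ : K ≃ₐ[ℚ] K, σ α ≠ α →
      cycDist p ω α β < (1 / 2) * cycDist p ω α (σ α)) :
    IntermediateField.adjoin ℚ {α} ≤ IntermediateField.adjoin ℚ {β} := by
  haveI : IsGalois ℚ K := IsCyclotomicExtension.isGalois {(p : ℕ)} ℚ K
  haveI : FiniteDimensional ℚ K := IsCyclotomicExtension.finiteDimensional {(p : ℕ)} ℚ K
  rw [IntermediateField.adjoin_le_iff, Set.singleton_subset_iff]
  set L := IntermediateField.adjoin ℚ {β} with hL
  have hfix : ∀ σ : K ≃ₐ[ℚ] K, σ ∈ L.fixingSubgroup → σ α = α := by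
    intro σ hσ
    have hβ : σ β = β := (L.mem_fixingSubgroup_iff σ).mp hσ β
      (IntermediateField.mem_adjoin_simple_self ℚ β)
    by_contra hne
    have hlt := h σ hne
    -- triangle inequality via Euclidean space
    have htri : cycDist (p : ℕ) ω α (σ α) ≤ 2 * cycDist (p : ℕ) ω α β := by
      have h2 : cycNorm (p : ℕ) ω (β - σ α) = cycDist (p : ℕ) ω α β := by
        have : β - σ α = σ (β - α) := by rw [map_sub, hβ]
        rw [this, cycNorm_algEquiv (p : ℕ) hp ω hω σ (β - α), cycDist,
          cycNorm_eq_norm_cycVec, cycNorm_eq_norm_cycVec, cycVec_sub, cycVec_sub,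
          ← norm_neg, neg_sub]
      calc cycDist (p : ℕ) ω α (σ α)
          = ‖(cycVec (p : ℕ) ω α - cycVec (p : ℕ) ω β) +
              (cycVec (p : ℕ) ω β - cycVec (p : ℕ) ω (σ α))‖ := by
            rw [cycDist, cycNorm_eq_norm_cycVec, cycVec_sub]
            congr 1
            abel
        _ ≤ ‖cycVec (p : ℕ) ω α - cycVec (p : ℕ) ω β‖ +
              ‖cycVec (p : ℕ) ω β - cycVec (p : ℕ) ω (σ α)‖ := norm_add_le _ _
        _ = cycDist (p : ℕ) ω α β + cycNorm (p : ℕ) ω (β - σ α) := by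
            rw [cycDist, cycNorm_eq_norm_cycVec, cycVec_sub,
              cycNorm_eq_norm_cycVec, cycVec_sub]
        _ = 2 * cycDist (p : ℕ) ω α β := by rw [h2]; ring
    linarith
  have hαfix : α ∈ IntermediateField.fixedField L.fixingSubgroup := by
    rintro ⟨σ, hσ⟩
    exact hfix σ hσ
  rwa [IsGalois.fixedField_fixingSubgroup L] at hαfix
end

section
/- The constant 1/2 in the Krasner-type lemma is optimal: for p = 3, α = ω, and β = −1/2, one has d(α, β) = 3/√2 and d(α, ω²) = 3√2, so that d(α, β) = (1/2)·d(α, ω²) (where ω² is the unique Galois conjugate of α other than α itself), yet ℚ(α) is not contained in ℚ(β). -/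
lemma aux_trace_omega (K : Type*) [Field K] [Algebra ℚ K] [IsCyclotomicExtension {3} ℚ K]
    (ω : K) (hω : IsPrimitiveRoot ω 3) : Algebra.trace ℚ K ω = -1 := by
  haveI : CharZero K := charZero_of_injective_algebraMap (algebraMap ℚ K).injective
  have hω' : IsPrimitiveRoot ω 3 := hω
  have h1 : (hω'.powerBasis ℚ).gen = ω := by simp [IsPrimitiveRoot.powerBasis]
  have h2 := (hω'.powerBasis ℚ).trace_gen_eq_nextCoeff_minpoly
  rw [h1] at h2
  have h3 : minpoly ℚ ω = Polynomial.cyclotomic 3 ℚ := by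
    have h4 := (Polynomial.cyclotomic_eq_minpoly_rat hω (by norm_num : 0 < 3)).symm
    convert h4 using 2 <;> exact Subsingleton.elim _ _
  rw [h3, Polynomial.cyclotomic_three] at h2
  rw [h2]
  have hd : (Polynomial.X ^ 2 + Polynomial.X + (1:Polynomial ℚ)).natDegree = 2 := by
    compute_degree!
  rw [Polynomial.nextCoeff, hd]
  norm_num [Polynomial.coeff_one]

lemma aux_finrank (K : Type*) [Field K] [Algebra ℚ K] [IsCyclotomicExtension {3} ℚ K] :
    Module.finrank ℚ K = 2 := by
  have := IsCyclotomicExtension.finrank (n := 3) K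
    (Polynomial.cyclotomic.irreducible_rat (by norm_num))
  simpa [Nat.totient_prime Nat.prime_three] using this

lemma aux_trQ (K : Type*) [Field K] [Algebra ℚ K] [IsCyclotomicExtension {3} ℚ K]
    (ω : K) (hω : IsPrimitiveRoot ω 3) (a b : ℚ) :
    Algebra.trace ℚ K ((a : K) + (b : K) * ω) = 2 * a - b := by
  rw [show ((a:K)) = algebraMap ℚ K a from (eq_ratCast _ a).symm,
      show ((b:K)) = algebraMap ℚ K b from (eq_ratCast _ b).symm]
  rw [map_add, Algebra.trace_algebraMap, aux_finrank K,
    show algebraMap ℚ K b * ω = b • ω by rw [Algebra.smul_def], map_smul,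
    aux_trace_omega K ω hω, smul_eq_mul]
  push_cast
  ring

/-- Optimality of the constant `1/2` in the Krasner-type lemma: for `p = 3`, `α = ω`,
`β = −1/2`, one has `d(α,β) = 3/√2`, `d(α,ω²) = 3√2`, hence `d(α,β) = (1/2)·d(α,ω²)`,
yet `ℚ(α) ⊄ ℚ(β)`. -/
theorem stmt4 (K : Type*) [Field K] [Algebra ℚ K] [IsCyclotomicExtension {3} ℚ K]
    (ω : K) (hω : IsPrimitiveRoot ω 3) :
    cycDist 3 ω ω (-(1 / 2 : K)) = 3 / Real.sqrt 2
    ∧ cycDist 3 ω ω (ω ^ 2) = 3 * Real.sqrt 2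
    ∧ cycDist 3 ω ω (-(1 / 2 : K)) = (1 / 2) * cycDist 3 ω ω (ω ^ 2)
    ∧ ¬ (IntermediateField.adjoin ℚ {ω} ≤ IntermediateField.adjoin ℚ {(-(1 / 2 : K))}) := by
  haveI : CharZero K := charZero_of_injective_algebraMap (algebraMap ℚ K).injective
  have hsq : ω ^ 2 = -1 - ω := by
    have h3 : ω ^ 3 = 1 := hω.pow_eq_one
    have hne : ω ≠ 1 := hω.ne_one (by norm_num)
    have : (ω - 1) * (ω ^ 2 + ω + 1) = 0 := by linear_combination h3
    rcases mul_eq_zero.mp this with h | h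
    · exact absurd (sub_eq_zero.mp h) hne
    · linear_combination h
  have trQ := aux_trQ K ω hω
  -- trace computations
  have e1 : (ω - -(1/2 : K)) * ω ^ 1 = ((-1 : ℚ) : K) + ((-1/2 : ℚ) : K) * ω := by
    push_cast
    linear_combination hsq
  have e2 : (ω - -(1/2 : K)) * ω ^ 2 = ((1/2 : ℚ) : K) + ((-1/2 : ℚ) : K) * ω := by
    push_cast
    linear_combination (ω - 1/2 : K) * hsq
  have e3 : (ω - ω ^ 2) * ω ^ 1 = ((-2 : ℚ) : K) + ((-1 : ℚ) : K) * ω := by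
    push_cast
    linear_combination (2 - ω : K) * hsq
  have e4 : (ω - ω ^ 2) * ω ^ 2 = ((1 : ℚ) : K) + ((-1 : ℚ) : K) * ω := by
    push_cast
    linear_combination (-ω^2 + 2*ω - 1 : K) * hsq
  have t1 : Algebra.trace ℚ K ((ω - -(1/2 : K)) * ω ^ 1) = -3/2 := by
    rw [e1, trQ]; norm_num
  have t2 : Algebra.trace ℚ K ((ω - -(1/2 : K)) * ω ^ 2) = 3/2 := by
    rw [e2, trQ]; norm_num
  have t3 : Algebra.trace ℚ K ((ω - ω ^ 2) * ω ^ 1) = -3 := by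
    rw [e3, trQ]; norm_num
  have t4 : Algebra.trace ℚ K ((ω - ω ^ 2) * ω ^ 2) = 3 := by
    rw [e4, trQ]; norm_num
  have hIcc : Finset.Icc 1 (3 - 1) = ({1, 2} : Finset ℕ) := by decide
  have sqrt2_pos : (0:ℝ) < Real.sqrt 2 := Real.sqrt_pos.mpr (by norm_num)
  have sqrt2_sq : Real.sqrt 2 * Real.sqrt 2 = 2 := Real.mul_self_sqrt (by norm_num)
  have d1 : cycDist 3 ω ω (-(1 / 2 : K)) = 3 / Real.sqrt 2 := by
    rw [cycDist, cycNorm, hIcc]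
    rw [Finset.sum_insert (by decide), Finset.sum_singleton, t1, t2]
    rw [show ((-3/2 : ℚ) : ℝ) ^ 2 + ((3/2 : ℚ) : ℝ) ^ 2 = (3 / Real.sqrt 2) ^ 2 by
      rw [div_pow, Real.sq_sqrt (by norm_num : (2:ℝ) ≥ 0)]; norm_num]
    exact Real.sqrt_sq (by positivity)
  have d2 : cycDist 3 ω ω (ω ^ 2) = 3 * Real.sqrt 2 := by
    rw [cycDist, cycNorm, hIcc]
    rw [Finset.sum_insert (by decide), Finset.sum_singleton, t3, t4]
    rw [show ((-3 : ℚ) : ℝ) ^ 2 + ((3 : ℚ) : ℝ) ^ 2 = (3 * Real.sqrt 2) ^ 2 by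
      push_cast; nlinarith [sqrt2_sq]]
    exact Real.sqrt_sq (by positivity)
  refine ⟨d1, d2, ?_, ?_⟩
  · rw [d1, d2]
    field_simp
    linarith [sqrt2_sq]
  · intro hle
    have hmem : ω ∈ IntermediateField.adjoin ℚ {(-(1 / 2 : K))} :=
      hle (IntermediateField.mem_adjoin_simple_self ℚ ω)
    have hbot : IntermediateField.adjoin ℚ {(-(1 / 2 : K))} ≤ ⊥ := by
      rw [IntermediateField.adjoin_le_iff]
      intro x hx
      rw [Set.mem_singleton_iff] at hx
      subst hx
      have : (-(1/2 : K)) = algebraMap ℚ K (-(1/2)) := by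
        rw [show algebraMap ℚ K (-(1/2)) = ((-(1/2):ℚ):K) from eq_ratCast _ _]; push_cast; norm_num
      rw [this]
      exact ⟨-(1/2), rfl⟩
    have : ω ∈ (⊥ : IntermediateField ℚ K) := hbot hmem
    rw [IntermediateField.mem_bot] at this
    obtain ⟨q, hq⟩ := this
    have h3 : ω ^ 3 = 1 := hω.pow_eq_one
    rw [← hq, ← map_pow, ← map_one (algebraMap ℚ K)] at h3
    have hq3 : q ^ 3 = 1 := (algebraMap ℚ K).injective h3
    have hfac : (q - 1) * (q ^ 2 + q + 1) = 0 := by linear_combination hq3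
    have hpos : q ^ 2 + q + 1 > 0 := by nlinarith [sq_nonneg (q + 1/2)]
    have hq1 : q = 1 := by
      rcases mul_eq_zero.mp hfac with h | h
      · linarith [sub_eq_zero.mp h]
      · linarith
    rw [hq1, map_one] at hq
    exact hω.ne_one (by norm_num) hq.symm
end

section
/- For α = a₁ω + ⋯ + a_{p−1}ω^{p−1} ∈ K with a_i ∈ ℚ, one has ‖α‖² = p²·(a₁² + ⋯ + a_{p−1}²) − (p+1)·Tr(α)², i.e., ‖α‖² = p²‖α‖_E² − (p+1)Tr(α)². -/
open Polynomial Finset in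
lemma trace_primroot' (p : ℕ+) (hp : (p : ℕ).Prime)
    (K : Type*) [Field K] [Algebra ℚ K] [IsCyclotomicExtension {(p : ℕ)} ℚ K]
    (η : K) (hη : IsPrimitiveRoot η p) : Algebra.trace ℚ K η = -1 := by
  haveI : Fact (p : ℕ).Prime := ⟨hp⟩
  haveI : CharZero K := charZero_of_injective_algebraMap (algebraMap ℚ K).injective
  have hgen : (hη.powerBasis ℚ).gen = η := hη.powerBasis_gen ℚ
  have htr := (hη.powerBasis ℚ).trace_gen_eq_nextCoeff_minpoly
  rw [hgen] at htr
  have hm : minpoly ℚ η = cyclotomic p ℚ := by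
    have := (cyclotomic_eq_minpoly_rat hη p.pos).symm
    convert this using 2 <;> exact Subsingleton.elim _ _
  have h2 : 2 ≤ (p:ℕ) := hp.two_le
  have hnd : (cyclotomic (p:ℕ) ℚ).natDegree = (p:ℕ) - 1 := by
    rw [natDegree_cyclotomic, Nat.totient_prime hp]
  rw [htr, hm, nextCoeff_of_natDegree_pos (by omega), hnd, cyclotomic_prime,
    Polynomial.finset_sum_coeff]
  have : ∀ i ∈ Finset.range (p:ℕ), (X ^ i : ℚ[X]).coeff ((p:ℕ) - 1 - 1)
      = if i = (p:ℕ) - 2 then 1 else 0 := by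
    intro i hi
    rw [coeff_X_pow]
    congr 1
    simp only [eq_iff_iff]
    omega
  rw [Finset.sum_congr rfl this, Finset.sum_ite_eq']
  simp only [Finset.mem_range]
  rw [if_pos (by omega)]

lemma trace_pow' (p : ℕ+) (hp : (p : ℕ).Prime)
    (K : Type*) [Field K] [Algebra ℚ K] [IsCyclotomicExtension {(p : ℕ)} ℚ K]
    (ω : K) (hω : IsPrimitiveRoot ω p) (k : ℕ) (hk : ¬ ((p:ℕ) ∣ k)) :
    Algebra.trace ℚ K (ω ^ k) = -1 := by
  have hcop : k.Coprime (p : ℕ) := (Nat.Coprime.symm ((hp.coprime_iff_not_dvd).mpr hk))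
  exact trace_primroot' p hp K _ (hω.pow_of_coprime k hcop)

open Polynomial in
lemma trace_one' (p : ℕ+) (hp : (p : ℕ).Prime)
    (K : Type*) [Field K] [Algebra ℚ K] [IsCyclotomicExtension {(p : ℕ)} ℚ K] :
    Algebra.trace ℚ K 1 = ((p:ℕ) : ℚ) - 1 := by
  haveI : Fact (p : ℕ).Prime := ⟨hp⟩
  have h1 : (1 : K) = algebraMap ℚ K 1 := by simp
  rw [h1, Algebra.trace_algebraMap]
  have hfr : Module.finrank ℚ K = (p:ℕ).totient :=
    IsCyclotomicExtension.finrank K (cyclotomic.irreducible_rat p.pos)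
  rw [hfr, Nat.totient_prime hp]
  simp

open Finset in
/-- For `α = a₁ω + ⋯ + a_{p−1}ω^{p−1}`:
`‖α‖² = p²·(a₁² + ⋯ + a_{p−1}²) − (p+1)·Tr(α)²`. -/
theorem stmt7 (p : ℕ+) (hp : (p : ℕ).Prime) (hodd : Odd (p : ℕ))
    (K : Type*) [Field K] [Algebra ℚ K] [IsCyclotomicExtension {(p : ℕ)} ℚ K]
    (ω : K) (hω : IsPrimitiveRoot ω p) (a : ℕ → ℚ) (α : K)
    (hα : α = ∑ i ∈ Finset.Icc 1 ((p : ℕ) - 1), a i • ω ^ i) :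
    (cycNorm p ω α) ^ 2 =
      (p : ℝ) ^ 2 * (∑ i ∈ Finset.Icc 1 ((p : ℕ) - 1), ((a i : ℝ)) ^ 2)
        - ((p : ℝ) + 1) * ((Algebra.trace ℚ K α : ℚ) : ℝ) ^ 2 := by
  set n : ℕ := (p : ℕ) with hn
  have h2 : 2 ≤ n := hp.two_le
  set T := Algebra.trace ℚ K with hT
  set S : ℚ := ∑ i ∈ Icc 1 (n - 1), a i with hS
  -- trace of α
  have htrα : T α = -S := by
    rw [hα, map_sum, hS, ← Finset.sum_neg_distrib]
    refine Finset.sum_congr rfl fun i hi => ?_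
    simp only [mem_Icc] at hi
    rw [map_smul, trace_pow' p hp K ω hω i
      (fun hdvd => absurd (Nat.le_of_dvd (by omega) hdvd) (by omega)), smul_eq_mul]
    ring
  -- key formula
  have hkey : ∀ j ∈ Icc 1 (n - 1), T (α * ω ^ j) = (n : ℚ) * a (n - j) - S := by
    intro j hj
    simp only [mem_Icc] at hj
    rw [hα, Finset.sum_mul, map_sum]
    have hterm : ∀ i ∈ Icc 1 (n - 1),
        T (a i • ω ^ i * ω ^ j) = (if i = n - j then (n : ℚ) * a i else 0) - a i := by
      intro i hi
      simp only [mem_Icc] at hi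
      rw [smul_mul_assoc, ← pow_add, map_smul, smul_eq_mul]
      by_cases hij : i + j = n
      · have : ω ^ (i + j) = 1 := by rw [hij]; exact hω.pow_eq_one
        rw [this, trace_one' p hp K, if_pos (by omega)]
        ring
      · rw [trace_pow' p hp K ω hω (i + j) (by
          intro hdvd
          have h1 : n ≤ i + j := Nat.le_of_dvd (by omega) hdvd
          have hd2 : n ∣ (i + j - n) := Nat.dvd_sub hdvd dvd_rfl
          have h0 : i + j - n = 0 := Nat.eq_zero_of_dvd_of_lt hd2 (by omega) |>.symm ▸ rfl
          omega), if_neg (by omega)]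
        ring
    rw [Finset.sum_congr rfl hterm, Finset.sum_sub_distrib, Finset.sum_ite_eq'
      (Icc 1 (n-1)) (n - j) (fun i => (n : ℚ) * a i), if_pos (by simp only [mem_Icc]; omega), ← hS]
  -- the rational identity
  have hcard : (Icc 1 (n - 1)).card = n - 1 := by rw [Nat.card_Icc]; omega
  have hQ : ∑ j ∈ Icc 1 (n - 1), (T (α * ω ^ j)) ^ 2
      = (n : ℚ) ^ 2 * (∑ i ∈ Icc 1 (n - 1), (a i) ^ 2) - ((n : ℚ) + 1) * (T α) ^ 2 := by
    rw [Finset.sum_congr rfl fun j hj => by rw [hkey j hj], htrα]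
    have hre : ∑ j ∈ Icc 1 (n - 1), ((n : ℚ) * a (n - j) - S) ^ 2
        = ∑ i ∈ Icc 1 (n - 1), ((n : ℚ) * a i - S) ^ 2 := by
      refine Finset.sum_nbij' (fun j => n - j) (fun i => n - i) (fun j hj => ?_)
        (fun i hi => ?_) (fun j hj => ?_) (fun i hi => ?_) (fun j hj => rfl) <;>
        simp only [mem_Icc] at * <;> omega
    rw [hre]
    have hexp : ∀ i ∈ Icc 1 (n - 1), ((n : ℚ) * a i - S) ^ 2
        = (n : ℚ) ^ 2 * (a i) ^ 2 - 2 * (n : ℚ) * S * a i + S ^ 2 := fun i _ => by ring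
    rw [Finset.sum_congr rfl hexp]
    rw [Finset.sum_add_distrib, Finset.sum_sub_distrib, ← Finset.mul_sum, ← Finset.mul_sum,
      ← hS, Finset.sum_const, hcard, nsmul_eq_mul]
    have : ((n - 1 : ℕ) : ℚ) = (n : ℚ) - 1 := by push_cast [Nat.cast_sub (by omega : 1 ≤ n)]; ring
    rw [this]
    ring
  -- pass to ℝ
  have hnonneg : (0:ℝ) ≤ ∑ j ∈ Finset.Icc 1 (n - 1), ((T (α * ω ^ j) : ℚ) : ℝ) ^ 2 :=
    Finset.sum_nonneg fun j _ => sq_nonneg _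
  rw [cycNorm, Real.sq_sqrt hnonneg]
  exact_mod_cast hQ
end

section
/- For every α ∈ K, one has ‖α‖ ≥ ‖α‖_E; that is, the norm ‖α‖ = √(Σ_{j=1}^{p−1} Tr(αω^j)²) is always greater than or equal to the Euclidean norm of the coordinate vector of α. -/
open Finset Polynomial

lemma trace_pow_prim (p : ℕ+) (hp : (p : ℕ).Prime) {K : Type*} [Field K] [Algebra ℚ K]
    [IsCyclotomicExtension {(p : ℕ)} ℚ K] {ω : K} (hω : IsPrimitiveRoot ω p) {k : ℕ}
    (hk : ¬ (p : ℕ) ∣ k) : Algebra.trace ℚ K (ω ^ k) = -1 := by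
  haveI : Fact (p : ℕ).Prime := ⟨hp⟩
  haveI : CharZero K := charZero_of_injective_algebraMap (algebraMap ℚ K).injective
  have hcop : k.Coprime (p : ℕ) := (hp.coprime_iff_not_dvd.2 hk).symm
  have hωk : IsPrimitiveRoot (ω ^ k) (p : ℕ) := hω.pow_of_coprime k hcop
  have hmin : cyclotomic (p : ℕ) ℚ = minpoly ℚ (ω ^ k) := by
    have h := cyclotomic_eq_minpoly_rat hωk p.pos
    convert h using 2 <;> · exact Subsingleton.elim _ _
  have hgen : (hωk.powerBasis ℚ).gen = ω ^ k := by simp [IsPrimitiveRoot.powerBasis]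
  have htr := (hωk.powerBasis ℚ).trace_gen_eq_nextCoeff_minpoly
  rw [hgen] at htr
  rw [htr, ← hmin]
  have hdeg : (cyclotomic (p : ℕ) ℚ).natDegree = (p : ℕ) - 1 := by
    rw [natDegree_cyclotomic, Nat.totient_prime hp]
  have h2 : 2 ≤ (p : ℕ) := hp.two_le
  rw [nextCoeff_of_natDegree_pos (by omega), hdeg, cyclotomic_prime]
  simp only [finset_sum_coeff, coeff_X_pow]
  rw [Finset.sum_ite_eq (Finset.range (p : ℕ)) ((p:ℕ) - 1 - 1) (fun _ => (1:ℚ))]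
  rw [if_pos (Finset.mem_range.2 (by omega))]

/-- The cyclotomic norm of `α` is at least the Euclidean norm of the coordinate vector
of `α` in the basis `ω, …, ω^{p−1}`. -/
theorem stmt8 (p : ℕ+) (hp : (p : ℕ).Prime) (hodd : Odd (p : ℕ))
    (K : Type*) [Field K] [Algebra ℚ K] [IsCyclotomicExtension {(p : ℕ)} ℚ K]
    (ω : K) (hω : IsPrimitiveRoot ω p) (a : ℕ → ℚ) (α : K)
    (hα : α = ∑ i ∈ Finset.Icc 1 ((p : ℕ) - 1), a i • ω ^ i) :
    Real.sqrt (∑ i ∈ Finset.Icc 1 ((p : ℕ) - 1), ((a i : ℝ)) ^ 2) ≤ cycNorm p ω α := by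
  haveI : Fact (p : ℕ).Prime := ⟨hp⟩
  have h2 : 2 ≤ (p : ℕ) := hp.two_le
  set n : ℕ := (p : ℕ) - 1 with hn
  set S : Finset ℕ := Finset.Icc 1 n with hSdef
  set s : ℚ := ∑ i ∈ S, a i with hs
  have hcard : S.card = n := by simp [hSdef]
  -- trace of 1
  have htr1 : Algebra.trace ℚ K (1 : K) = ((p : ℚ) - 1) := by
    rw [show (1 : K) = algebraMap ℚ K 1 by simp, Algebra.trace_algebraMap,
      IsCyclotomicExtension.finrank K (cyclotomic.irreducible_rat p.pos),
      Nat.totient_prime hp]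
    rw [nsmul_eq_mul, Nat.cast_sub (by omega : 1 ≤ (p : ℕ)), Nat.cast_one, mul_one]
  -- trace of α * ω^j
  have htr : ∀ j ∈ S, Algebra.trace ℚ K (α * ω ^ j) = (p : ℚ) * a ((p : ℕ) - j) - s := by
    intro j hj
    rw [hSdef, Finset.mem_Icc] at hj
    rw [hα, Finset.sum_mul]
    rw [Finset.sum_congr rfl (fun i _ => by
      rw [smul_mul_assoc, ← pow_add] : ∀ i ∈ S, (a i • ω ^ i) * ω ^ j = a i • ω ^ (i + j))]
    rw [map_sum]
    have hterm : ∀ i ∈ S, Algebra.trace ℚ K (a i • ω ^ (i + j)) =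
        (if i = (p : ℕ) - j then (p : ℚ) * a i else 0) - a i := by
      intro i hi
      rw [hSdef, Finset.mem_Icc] at hi
      rw [LinearMap.map_smul, smul_eq_mul]
      by_cases h : i = (p : ℕ) - j
      · have hij : i + j = (p : ℕ) := by omega
        rw [hij, hω.pow_eq_one, htr1, if_pos h]
        ring
      · have hndvd : ¬ (p : ℕ) ∣ (i + j) := by
          rintro ⟨c, hc⟩
          have hc2 : c < 2 := by
            have : (p : ℕ) * c < (p : ℕ) * 2 := by rw [← hc]; omega
            exact Nat.lt_of_mul_lt_mul_left this
          interval_cases c <;> omega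
        rw [trace_pow_prim p hp hω hndvd, if_neg h]
        ring
    rw [Finset.sum_congr rfl hterm, Finset.sum_sub_distrib,
      Finset.sum_ite_eq' S ((p : ℕ) - j) (fun i => (p : ℚ) * a i),
      if_pos (by rw [hSdef, Finset.mem_Icc]; omega), ← hs]
  -- reindex j ↦ p - j
  have hsum : ∑ j ∈ S, (Algebra.trace ℚ K (α * ω ^ j)) ^ 2
      = ∑ i ∈ S, ((p : ℚ) * a i - s) ^ 2 := by
    rw [Finset.sum_congr rfl (fun j hj => by rw [htr j hj])]
    refine Finset.sum_nbij' (fun j => (p : ℕ) - j) (fun i => (p : ℕ) - i) ?_ ?_ ?_ ?_ ?_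
    · intro j hj; simp only [hSdef, Finset.mem_Icc] at hj ⊢; omega
    · intro i hi; simp only [hSdef, Finset.mem_Icc] at hi ⊢; omega
    · intro j hj; simp only [hSdef, Finset.mem_Icc] at hj; omega
    · intro i hi; simp only [hSdef, Finset.mem_Icc] at hi; omega
    · intro j hj; rfl
  -- the core inequality over ℚ
  have hQ : (0 : ℚ) ≤ ∑ i ∈ S, (a i) ^ 2 := Finset.sum_nonneg fun i _ => sq_nonneg _
  have hCS : s ^ 2 ≤ (n : ℚ) * ∑ i ∈ S, (a i) ^ 2 := by
    have h := sq_sum_le_card_mul_sum_sq (s := S) (f := a)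
    rwa [hcard] at h
  have hnp : (n : ℚ) = (p : ℚ) - 1 := by
    rw [hn, Nat.cast_sub (by omega : 1 ≤ (p : ℕ)), Nat.cast_one]
  have hmain : ∑ i ∈ S, (a i) ^ 2 ≤ ∑ i ∈ S, ((p : ℚ) * a i - s) ^ 2 := by
    have hexp : ∑ i ∈ S, ((p : ℚ) * a i - s) ^ 2
        = (p : ℚ) ^ 2 * (∑ i ∈ S, (a i) ^ 2) - 2 * (p : ℚ) * s ^ 2 + (n : ℚ) * s ^ 2 := by
      have hterm : ∀ i, ((p : ℚ) * a i - s) ^ 2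
          = (p : ℚ) ^ 2 * (a i) ^ 2 - (2 * (p : ℚ) * s) * a i + s ^ 2 := fun i => by ring
      simp_rw [hterm]
      rw [Finset.sum_add_distrib, Finset.sum_sub_distrib, ← Finset.mul_sum, ← Finset.mul_sum,
        Finset.sum_const, hcard, nsmul_eq_mul, ← hs]
      ring
    rw [hexp, hnp]
    have hp2 : (2 : ℚ) ≤ (p : ℚ) := by exact_mod_cast h2
    have hkey : ((p:ℚ) + 1) * s ^ 2 ≤ ((p:ℚ) + 1) * (((p:ℚ) - 1) * ∑ i ∈ S, (a i) ^ 2) := by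
      have h := mul_le_mul_of_nonneg_left hCS (show (0:ℚ) ≤ (p:ℚ) + 1 by linarith)
      rwa [hnp] at h
    nlinarith [hkey, sq_nonneg s, hQ]
  -- conclude
  have final : (∑ i ∈ S, (a i) ^ 2 : ℚ) ≤ ∑ j ∈ S, (Algebra.trace ℚ K (α * ω ^ j)) ^ 2 := by
    rw [hsum]; exact hmain
  unfold cycNorm
  apply Real.sqrt_le_sqrt
  exact_mod_cast final
end

section
/- The diameter of the box B(p,N) under the metric d equals 2Np√(p−1): for all α, β ∈ B(p,N) one has d(α, β) ≤ 2Np√(p−1), and equality is achieved by the pair α = Nω − Nω² + Nω³ − ⋯ + Nω^{p−2} − Nω^{p−1} (i.e., α = Σ_{i=1}^{p−1} N(−1)^{i−1} ω^i) and β = −α, both of which lie in B(p,N). -/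
/-- The box `B(p,N) = {a₁ω + ⋯ + a_{p−1}ω^{p−1} : aᵢ ∈ ℤ, −N ≤ aᵢ ≤ N}` as a finset of `K`. -/
noncomputable def cycBox (p : ℕ) {K : Type*} [Field K] [Algebra ℚ K] (ω : K) (N : ℕ) :
    Finset K :=
  letI := Classical.decEq K
  (Fintype.piFinset fun _ : Fin (p - 1) => Finset.Icc (-(N : ℤ)) (N : ℤ)).image
    fun a => ∑ i : Fin (p - 1), (a i : K) * ω ^ ((i : ℕ) + 1)

open Polynomial Finset

section helpers

lemma sum_Icc_shift' {M : Type*} [AddCommMonoid M] (n : ℕ) (f : ℕ → M) :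
    ∑ j ∈ Finset.Icc 1 n, f j = ∑ m ∈ Finset.range n, f (m + 1) := by
  rw [← Finset.Ico_add_one_right_eq_Icc, Finset.sum_Ico_eq_sum_range]
  simp [add_comm]

lemma sum_Icc_rev' {M : Type*} [AddCommMonoid M] (n : ℕ) (f : ℕ → M) :
    ∑ j ∈ Finset.Icc 1 n, f (n - j) = ∑ m ∈ Finset.range n, f m := by
  rw [sum_Icc_shift' n (fun j => f (n - j)), ← Finset.sum_range_reflect]
  refine Finset.sum_congr rfl fun m hm => ?_
  simp only [Finset.mem_range] at hm
  congr 1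
  omega

lemma key_ineq' (n : ℕ) (q M : ℤ) (c : Fin n → ℤ)
    (hc : ∀ i, (c i)^2 ≤ M^2) (hn : (n:ℤ) ≤ 2*q) :
    ∑ i, (q * c i - ∑ i', c i')^2 ≤ q^2 * n * M^2 := by
  set S := ∑ i', c i' with hS
  have h1 : ∑ i, (q * c i - S)^2
      = q^2 * (∑ i, (c i)^2) - 2*q*S^2 + n * S^2 := by
    have e : ∀ i : Fin n, (q * c i - S)^2
        = q^2 * (c i)^2 - 2*q*S*(c i) + S^2 := fun i => by ring
    rw [Finset.sum_congr rfl fun i _ => e i, Finset.sum_add_distrib,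
      Finset.sum_sub_distrib, ← Finset.mul_sum, ← Finset.mul_sum, ← hS,
      Finset.sum_const, Finset.card_univ, Fintype.card_fin, nsmul_eq_mul]
    ring
  rw [h1]
  have h2 : ∑ i, (c i)^2 ≤ (n:ℤ) * M^2 := by
    calc ∑ i, (c i)^2 ≤ ∑ _i : Fin n, M^2 := Finset.sum_le_sum fun i _ => hc i
    _ = (n:ℤ) * M^2 := by
        rw [Finset.sum_const, Finset.card_univ, Fintype.card_fin, nsmul_eq_mul]
  nlinarith [sq_nonneg S, sq_nonneg q]

variable (p : ℕ+) (hp : (p : ℕ).Prime)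
    {K : Type*} [Field K] [Algebra ℚ K] [IsCyclotomicExtension {(p : ℕ)} ℚ K]
    {ω : K} (hω : IsPrimitiveRoot ω p)

include hp in
lemma trace_prim' {ζ : K} (hζ : IsPrimitiveRoot ζ p) : Algebra.trace ℚ K ζ = -1 := by
  haveI : Fact (p:ℕ).Prime := ⟨hp⟩
  have hirr := cyclotomic.irreducible_rat (n := p) p.pos
  have hgen : (hζ.powerBasis ℚ).gen = ζ := hζ.powerBasis_gen ℚ
  have h1 := PowerBasis.trace_gen_eq_nextCoeff_minpoly (hζ.powerBasis ℚ)
  rw [hgen] at h1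
  rw [h1, ← hζ.minpoly_eq_cyclotomic_of_irreducible hirr, cyclotomic_prime ℚ p]
  have h3 : 2 ≤ (p:ℕ) := hp.two_le
  have hdeg : (∑ i ∈ Finset.range (p:ℕ), (X:ℚ[X]) ^ i).natDegree = (p:ℕ) - 1 := by
    rw [← cyclotomic_prime ℚ p, natDegree_cyclotomic, Nat.totient_prime hp]
  rw [Polynomial.nextCoeff_of_natDegree_pos (by omega), hdeg, finset_sum_coeff]
  have : ∀ i ∈ Finset.range (p:ℕ), ((X:ℚ[X])^i).coeff ((p:ℕ)-1-1)
      = if i = (p:ℕ)-2 then 1 else 0 := by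
    intro i _
    rw [coeff_X_pow]
    congr 1
    rw [eq_iff_iff]; omega
  rw [Finset.sum_congr rfl this,
    Finset.sum_ite_eq' (Finset.range (p:ℕ)) ((p:ℕ)-2) (fun _ => (1:ℚ))]
  simp only [Finset.mem_range]
  rw [if_pos (by omega)]

include hp hω in
lemma trace_pow'_s9 (k : ℕ) : Algebra.trace ℚ K (ω ^ k)
    = if (p:ℕ) ∣ k then ((p:ℚ) - 1) else -1 := by
  haveI : Fact (p:ℕ).Prime := ⟨hp⟩
  have hirr := cyclotomic.irreducible_rat (n := p) p.pos
  split_ifs with h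
  · rw [(hω.pow_eq_one_iff_dvd k).2 h]
    have : (1 : K) = algebraMap ℚ K 1 := by simp
    rw [this, Algebra.trace_algebraMap, IsCyclotomicExtension.finrank K hirr,
      Nat.totient_prime hp]
    have h2 : 2 ≤ (p:ℕ) := hp.two_le
    push_cast [Nat.cast_sub (show 1 ≤ (p:ℕ) by omega)]
    simp
  · exact trace_prim' p hp (hω.pow_of_coprime k ((hp.coprime_iff_not_dvd.2 h).symm))

include hp hω in
lemma trace_box' (a : Fin ((p:ℕ)-1) → ℤ) {j : ℕ} (hj1 : 1 ≤ j) (hj2 : j ≤ (p:ℕ)-1) :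
    Algebra.trace ℚ K ((∑ i : Fin ((p:ℕ)-1), (a i : K) * ω^((i:ℕ)+1)) * ω^j)
    = (((p:ℕ) * a ⟨(p:ℕ)-1-j, by have := hp.two_le; omega⟩ - ∑ i, a i : ℤ) : ℚ) := by
  have h2 : 2 ≤ (p:ℕ) := hp.two_le
  set i₀ : Fin ((p:ℕ)-1) := ⟨(p:ℕ)-1-j, by omega⟩ with hi₀
  rw [Finset.sum_mul]
  have e1 : ∀ i : Fin ((p:ℕ)-1), (a i : K) * ω^((i:ℕ)+1) * ω^j
      = (a i : ℚ) • ω^((i:ℕ)+1+j) := by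
    intro i
    rw [pow_add, Algebra.smul_def]
    simp only [map_intCast]
    ring
  rw [Finset.sum_congr rfl fun i _ => e1 i, map_sum]
  simp only [map_smul, smul_eq_mul]
  have e2 : ∀ i : Fin ((p:ℕ)-1),
      (a i : ℚ) * Algebra.trace ℚ K (ω^((i:ℕ)+1+j))
      = (if i = i₀ then (p:ℚ) * a i else 0) - a i := by
    intro i
    rw [trace_pow'_s9 p hp hω]
    have hcond : (p:ℕ) ∣ (i:ℕ)+1+j ↔ i = i₀ := by
      have hi := i.isLt
      rw [hi₀, Fin.eq_mk_iff_val_eq]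
      constructor
      · rintro ⟨k, hk⟩
        have hk2 : (p:ℕ)*k < (p:ℕ)*2 := by omega
        have hk3 : k < 2 := Nat.lt_of_mul_lt_mul_left hk2
        have hk0 : k ≠ 0 := by rintro rfl; omega
        have hk1 : k = 1 := by omega
        subst hk1
        omega
      · intro he
        have : (i:ℕ)+1+j = (p:ℕ) := by omega
        rw [this]
    simp only [hcond]
    split_ifs <;> push_cast <;> ring
  rw [Finset.sum_congr rfl fun i _ => e2 i, Finset.sum_sub_distrib,
    Finset.sum_ite_eq' Finset.univ i₀ (fun i => (p:ℚ) * a i), if_pos (Finset.mem_univ _)]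
  push_cast
  ring

include hp hω in
lemma norm_box' (a : Fin ((p:ℕ)-1) → ℤ) :
    cycNorm p ω (∑ i : Fin ((p:ℕ)-1), (a i : K) * ω^((i:ℕ)+1))
    = Real.sqrt (((∑ i : Fin ((p:ℕ)-1), ((p:ℕ) * a i - ∑ i', a i')^2 : ℤ) : ℝ)) := by
  have h2 : 2 ≤ (p:ℕ) := hp.two_le
  unfold cycNorm
  congr 1
  set a' : ℕ → ℤ := fun m => if h : m < (p:ℕ)-1 then a ⟨m, h⟩ else 0 with ha'
  set g : ℕ → ℝ := fun m => ((((p:ℕ) * a' m - ∑ i', a i' : ℤ)) : ℝ)^2 with hg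
  have step1 : ∀ j ∈ Finset.Icc 1 ((p:ℕ)-1),
      ((Algebra.trace ℚ K ((∑ i : Fin ((p:ℕ)-1), (a i : K) * ω^((i:ℕ)+1)) * ω^j) : ℚ) : ℝ)^2
      = g ((p:ℕ)-1-j) := by
    intro j hj
    rw [Finset.mem_Icc] at hj
    rw [trace_box' p hp hω a hj.1 hj.2]
    have : a' ((p:ℕ)-1-j) = a ⟨(p:ℕ)-1-j, by omega⟩ := by
      rw [ha']
      exact dif_pos (by omega)
    rw [hg]
    simp only [this]
    norm_num
  rw [Finset.sum_congr rfl step1, sum_Icc_rev' ((p:ℕ)-1) g,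
    ← Fin.sum_univ_eq_sum_range g ((p:ℕ)-1)]
  push_cast
  refine Finset.sum_congr rfl fun i _ => ?_
  have : a' (i:ℕ) = a i := by
    rw [ha']
    simp [Fin.eta, i.isLt]
  rw [hg]
  simp only [this]
  push_cast
  ring

end helpers

/-- The diameter of `B(p,N)` is `2Np√(p−1)`, achieved by
`α = Nω − Nω² + ⋯ + Nω^{p−2} − Nω^{p−1}` and `β = −α`. -/
theorem stmt9 (p : ℕ+) (hp : (p : ℕ).Prime) (hodd : Odd (p : ℕ))
    (K : Type*) [Field K] [Algebra ℚ K] [IsCyclotomicExtension {(p : ℕ)} ℚ K]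
    (ω : K) (hω : IsPrimitiveRoot ω p) (N : ℕ) (hN : 0 < N) :
    (∀ α ∈ cycBox p ω N, ∀ β ∈ cycBox p ω N,
        cycDist p ω α β ≤ 2 * N * p * Real.sqrt ((p : ℝ) - 1))
    ∧ ∀ α₀ : K,
        α₀ = ∑ i ∈ Finset.Icc 1 ((p : ℕ) - 1), ((N : K) * (-1) ^ (i - 1)) * ω ^ i →
          α₀ ∈ cycBox p ω N ∧ -α₀ ∈ cycBox p ω N ∧
            cycDist p ω α₀ (-α₀) = 2 * N * p * Real.sqrt ((p : ℝ) - 1) := by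
  classical
  have h2 : 2 ≤ (p:ℕ) := hp.two_le
  have hR : (0:ℝ) ≤ 2*N*p := by positivity
  have hbound : Real.sqrt ((((p:ℕ):ℤ)^2 * (((p:ℕ)-1 : ℕ):ℤ) * (2*(N:ℤ))^2 : ℤ) : ℝ)
      = 2*N*p*Real.sqrt ((p:ℝ)-1) := by
    have he : ((((p:ℕ):ℤ)^2 * (((p:ℕ)-1 : ℕ):ℤ) * (2*(N:ℤ))^2 : ℤ) : ℝ)
        = (2*(N:ℝ)*p)^2 * ((p:ℝ)-1) := by
      push_cast [Nat.cast_sub (show 1 ≤ (p:ℕ) by omega)]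
      ring
    rw [he, Real.sqrt_mul (sq_nonneg _), Real.sqrt_sq hR]
  constructor
  · intro α hα β hβ
    unfold cycBox at hα hβ
    rw [Finset.mem_image] at hα hβ
    obtain ⟨a, ha, rfl⟩ := hα
    obtain ⟨b, hb, rfl⟩ := hβ
    unfold cycDist
    have hdiff : (∑ i : Fin ((p:ℕ)-1), (a i : K) * ω ^ ((i:ℕ)+1))
        - (∑ i : Fin ((p:ℕ)-1), (b i : K) * ω ^ ((i:ℕ)+1))
        = ∑ i : Fin ((p:ℕ)-1), ((a i - b i : ℤ) : K) * ω ^ ((i:ℕ)+1) := by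
      rw [← Finset.sum_sub_distrib]
      refine Finset.sum_congr rfl fun i _ => ?_
      push_cast
      ring
    rw [hdiff, norm_box' p hp hω (fun i => a i - b i)]
    have hc : ∀ i : Fin ((p:ℕ)-1), (a i - b i)^2 ≤ (2*(N:ℤ))^2 := by
      intro i
      have ha' := Finset.mem_Icc.mp (Fintype.mem_piFinset.mp ha i)
      have hb' := Finset.mem_Icc.mp (Fintype.mem_piFinset.mp hb i)
      exact sq_le_sq' (by omega) (by omega)
    have hT := key_ineq' ((p:ℕ)-1) ((p:ℕ):ℤ) (2*(N:ℤ)) (fun i => a i - b i) hc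
      (by push_cast [Nat.cast_sub (show 1 ≤ (p:ℕ) by omega)]; omega)
    calc Real.sqrt ((∑ i : Fin ((p:ℕ)-1),
            (((p:ℕ):ℤ) * (a i - b i) - ∑ i', (a i' - b i'))^2 : ℤ) : ℝ)
        ≤ Real.sqrt ((((p:ℕ):ℤ)^2 * (((p:ℕ)-1 : ℕ):ℤ) * (2*(N:ℤ))^2 : ℤ) : ℝ) := by
          apply Real.sqrt_le_sqrt
          exact_mod_cast hT
      _ = 2*N*p*Real.sqrt ((p:ℝ)-1) := hbound
  · intro α₀ hα₀
    set a : Fin ((p:ℕ)-1) → ℤ := fun i => (N:ℤ) * (-1)^(i:ℕ) with haa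
    have habs : ∀ i : Fin ((p:ℕ)-1), -(N:ℤ) ≤ a i ∧ a i ≤ N := by
      intro i
      rcases Nat.even_or_odd (i:ℕ) with h | h
      · simp only [haa, h.neg_one_pow, mul_one]
        omega
      · simp only [haa, h.neg_one_pow, mul_neg_one]
        omega
    have hrep : α₀ = ∑ i : Fin ((p:ℕ)-1), ((a i : ℤ) : K) * ω ^ ((i:ℕ)+1) := by
      rw [hα₀, sum_Icc_shift' ((p:ℕ)-1) (fun i => ((N : K) * (-1) ^ (i - 1)) * ω ^ i),
        ← Fin.sum_univ_eq_sum_range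
          (fun m => ((N : K) * (-1) ^ ((m + 1) - 1)) * ω ^ (m+1)) ((p:ℕ)-1)]
      refine Finset.sum_congr rfl fun i _ => ?_
      simp only [Nat.add_sub_cancel, haa]
      push_cast
      ring
    have hmem : α₀ ∈ cycBox p ω N := by
      unfold cycBox
      rw [Finset.mem_image]
      exact ⟨a, Fintype.mem_piFinset.mpr fun i =>
        Finset.mem_Icc.mpr ⟨(habs i).1, (habs i).2⟩, hrep.symm⟩
    have hmem' : -α₀ ∈ cycBox p ω N := by
      unfold cycBox
      rw [Finset.mem_image]
      refine ⟨fun i => -(a i), Fintype.mem_piFinset.mpr fun i =>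
        Finset.mem_Icc.mpr ⟨by have := (habs i).2; omega, by have := (habs i).1; omega⟩, ?_⟩
      rw [hrep, ← Finset.sum_neg_distrib]
      refine Finset.sum_congr rfl fun i _ => ?_
      push_cast
      ring
    refine ⟨hmem, hmem', ?_⟩
    unfold cycDist
    have hdd : α₀ - -α₀ = ∑ i : Fin ((p:ℕ)-1), ((2 * a i : ℤ) : K) * ω ^ ((i:ℕ)+1) := by
      rw [sub_neg_eq_add, hrep, ← Finset.sum_add_distrib]
      refine Finset.sum_congr rfl fun i _ => ?_
      push_cast
      ring
    rw [hdd, norm_box' p hp hω (fun i => 2 * a i)]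
    have hS : (∑ i' : Fin ((p:ℕ)-1), 2 * a i') = 0 := by
      simp only [haa]
      have : ∀ i : Fin ((p:ℕ)-1), 2 * ((N:ℤ) * (-1)^(i:ℕ)) = (2*(N:ℤ)) * (-1)^(i:ℕ) :=
        fun i => by ring
      rw [Finset.sum_congr rfl fun i _ => this i, ← Finset.mul_sum,
        Fin.sum_univ_eq_sum_range (fun m => (-1:ℤ)^m) ((p:ℕ)-1), neg_one_geom_sum,
        if_pos (Nat.Odd.sub_odd hodd odd_one), mul_zero]
    have hterm : ∀ i : Fin ((p:ℕ)-1),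
        (((p:ℕ):ℤ) * (2 * a i) - 0)^2 = ((p:ℕ):ℤ)^2 * (2*(N:ℤ))^2 := by
      intro i
      have h1 : ((-1:ℤ)^(i:ℕ))^2 = 1 := by
        rw [← pow_mul, mul_comm, pow_mul, neg_one_sq, one_pow]
      calc (((p:ℕ):ℤ) * (2 * a i) - 0)^2
          = ((p:ℕ):ℤ)^2 * (2*(N:ℤ))^2 * ((-1:ℤ)^(i:ℕ))^2 := by rw [haa]; ring
        _ = ((p:ℕ):ℤ)^2 * (2*(N:ℤ))^2 := by rw [h1, mul_one]
    have hTeq : (∑ i : Fin ((p:ℕ)-1),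
        (((p:ℕ):ℤ) * (2 * a i) - ∑ i', 2 * a i')^2 : ℤ)
        = ((p:ℕ):ℤ)^2 * (((p:ℕ)-1 : ℕ):ℤ) * (2*(N:ℤ))^2 := by
      rw [hS]
      rw [Finset.sum_congr rfl fun i _ => hterm i, Finset.sum_const, Finset.card_univ,
        Fintype.card_fin, nsmul_eq_mul]
      ring
    rw [hTeq, hbound]
end

section
/- For any positive integer N and odd prime p, the averaged fourth-order coefficient sum satisfies (1/(2N+1)^{2(p−1)}) · Σ_{a,b} Σ_{i=1}^{p−1} Σ_{j=1}^{p−1} (a_i − b_i)²(a_j − b_j)² = (2/45)·N(N+1)(p−1)(10N²p + 4N² + 10Np + 4N − 3), where the outer sum runs over all pairs of tuples a = (a₁,…,a_{p−1}) and b = (b₁,…,b_{p−1}) of integers with −N ≤ a_i, b_i ≤ N for all i. -/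
open Finset


open Finset

lemma Icc_succ_aux (N : ℕ) :
    Finset.Icc (-((N:ℤ)+1)) ((N:ℤ)+1)
      = insert (-((N:ℤ)+1)) (insert ((N:ℤ)+1) (Finset.Icc (-(N:ℤ)) N)) := by
  ext x; simp only [mem_Icc, mem_insert]; omega

lemma sum_pow_Icc (N k : ℕ) (f : ℤ → ℝ) :
    ∑ x ∈ Finset.Icc (-((N:ℤ)+1)) ((N:ℤ)+1), f x
      = f (-((N:ℤ)+1)) + f ((N:ℤ)+1) + ∑ x ∈ Finset.Icc (-(N:ℤ)) N, f x := by
  rw [Icc_succ_aux, Finset.sum_insert (by simp only [mem_insert, mem_Icc]; omega),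
    Finset.sum_insert (by simp only [mem_Icc]; omega)]
  ring

lemma sIcc1 (N : ℕ) : ∑ x ∈ Finset.Icc (-(N:ℤ)) N, ((x:ℝ)) = 0 := by
  induction N with
  | zero => simp
  | succ n ih =>
      push_cast
      rw [sum_pow_Icc n 1 (fun x => (x:ℝ))]
      push_cast
      rw [ih]; ring

lemma sIcc2 (N : ℕ) : ∑ x ∈ Finset.Icc (-(N:ℤ)) N, ((x:ℝ))^2
    = N*(N+1)*(2*N+1)/3 := by
  induction N with
  | zero => simp
  | succ n ih =>
      push_cast
      rw [sum_pow_Icc n 2 (fun x => (x:ℝ)^2)]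
      push_cast
      rw [ih]; ring

lemma sIcc3 (N : ℕ) : ∑ x ∈ Finset.Icc (-(N:ℤ)) N, ((x:ℝ))^3 = 0 := by
  induction N with
  | zero => simp
  | succ n ih =>
      push_cast
      rw [sum_pow_Icc n 3 (fun x => (x:ℝ)^3)]
      push_cast
      rw [ih]; ring

lemma sIcc4 (N : ℕ) : ∑ x ∈ Finset.Icc (-(N:ℤ)) N, ((x:ℝ))^4
    = N*(N+1)*(2*N+1)*(3*N^2+3*N-1)/15 := by
  induction N with
  | zero => simp
  | succ n ih =>
      push_cast
      rw [sum_pow_Icc n 4 (fun x => (x:ℝ)^4)]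
      push_cast
      rw [ih]; ring

lemma cardIcc (N : ℕ) : (Finset.Icc (-(N:ℤ)) N).card = 2*N+1 := by
  rw [Int.card_Icc]; omega

lemma sumP2 (N : ℕ) :
    ∑ z ∈ (Finset.Icc (-(N:ℤ)) N) ×ˢ (Finset.Icc (-(N:ℤ)) N), (((z.1 - z.2 : ℤ)):ℝ)^2
      = 2*N*(N+1)*(2*N+1)^2/3 := by
  rw [Finset.sum_product]
  have expand : ∀ x y : ℤ, (((x - y : ℤ)):ℝ)^2
      = ((x:ℝ)^2 - (2*(x:ℝ))*(y:ℝ)) + (y:ℝ)^2 := by intro x y; push_cast; ring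
  simp only [expand, Finset.sum_add_distrib, Finset.sum_sub_distrib, ← Finset.mul_sum,
    Finset.sum_const, cardIcc, nsmul_eq_mul, sIcc1, sIcc2, mul_zero, sub_zero]
  push_cast; ring

lemma sumP4 (N : ℕ) :
    ∑ z ∈ (Finset.Icc (-(N:ℤ)) N) ×ˢ (Finset.Icc (-(N:ℤ)) N), (((z.1 - z.2 : ℤ)):ℝ)^4
      = 2*N*(N+1)*(2*N+1)^2*(8*N^2+8*N-1)/15 := by
  rw [Finset.sum_product]
  have expand : ∀ x y : ℤ, (((x - y : ℤ)):ℝ)^4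
      = (((((x:ℝ)^4 - (4*(x:ℝ)^3)*(y:ℝ)) + (6*(x:ℝ)^2)*(y:ℝ)^2) - (4*(x:ℝ))*(y:ℝ)^3)
          + (y:ℝ)^4) := by intro x y; push_cast; ring
  have inner : ∀ x ∈ Finset.Icc (-(N:ℤ)) N, ∑ y ∈ Finset.Icc (-(N:ℤ)) N, (((x - y : ℤ)):ℝ)^4
      = (2*N+1)*(x:ℝ)^4 + (6*(N*(N+1)*(2*N+1)/3))*(x:ℝ)^2
        + N*(N+1)*(2*N+1)*(3*N^2+3*N-1)/15 := by
    intro x _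
    simp only [expand, Finset.sum_add_distrib, Finset.sum_sub_distrib, ← Finset.mul_sum,
      Finset.sum_const, cardIcc, nsmul_eq_mul, sIcc1, sIcc2, sIcc3, sIcc4, mul_zero, sub_zero]
    push_cast; ring
  rw [Finset.sum_congr rfl inner]
  simp only [Finset.sum_add_distrib, ← Finset.mul_sum, Finset.sum_const, cardIcc,
    nsmul_eq_mul, sIcc2, sIcc4]
  push_cast; ring

lemma pi_single {n : ℕ} {γ : Type*} [DecidableEq γ] (s : Finset γ) (g : γ → ℝ) (i : Fin n) :
    ∑ c ∈ Fintype.piFinset (fun _ : Fin n => s), g (c i)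
      = (s.card : ℝ) ^ (n - 1) * ∑ x ∈ s, g x := by
  have key : ∑ c ∈ Fintype.piFinset (fun _ : Fin n => s),
      ∏ k : Fin n, (if k = i then g (c k) else 1)
      = ∏ k : Fin n, ∑ x ∈ s, (if k = i then g x else 1) :=
    (Finset.prod_univ_sum (fun _ : Fin n => s) (fun k x => if k = i then g x else 1)).symm
  have h1 : ∀ c : Fin n → γ, (∏ k : Fin n, (if k = i then g (c k) else 1)) = g (c i) := by
    intro c
    rw [Finset.prod_ite_eq' univ i (fun k => g (c k))]
    simp
  have h2 : (∏ k : Fin n, ∑ x ∈ s, (if k = i then g x else 1))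
      = (∑ x ∈ s, g x) * (s.card : ℝ) ^ (n - 1) := by
    rw [← Finset.mul_prod_erase univ _ (mem_univ i)]
    simp only [if_pos rfl]
    congr 1
    rw [Finset.prod_congr rfl (fun k hk => ?_), Finset.prod_const,
      Finset.card_erase_of_mem (mem_univ i), card_univ, Fintype.card_fin]
    rw [Finset.sum_congr rfl (fun x _ => if_neg (Finset.ne_of_mem_erase hk)),
      Finset.sum_const, nsmul_eq_mul, mul_one]
  calc ∑ c ∈ Fintype.piFinset (fun _ : Fin n => s), g (c i)
      = ∑ c ∈ Fintype.piFinset (fun _ : Fin n => s),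
          ∏ k : Fin n, (if k = i then g (c k) else 1) := by
        exact Finset.sum_congr rfl (fun c _ => (h1 c).symm)
    _ = _ := by rw [key, h2, mul_comm]

lemma pi_pair {n : ℕ} {γ : Type*} [DecidableEq γ] (s : Finset γ) (g h : γ → ℝ)
    (i j : Fin n) (hij : i ≠ j) :
    ∑ c ∈ Fintype.piFinset (fun _ : Fin n => s), g (c i) * h (c j)
      = (s.card : ℝ) ^ (n - 2) * ((∑ x ∈ s, g x) * (∑ x ∈ s, h x)) := by
  set f : Fin n → γ → ℝ := fun k x => if k = i then g x else if k = j then h x else 1 with hf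
  have key : ∑ c ∈ Fintype.piFinset (fun _ : Fin n => s), ∏ k : Fin n, f k (c k)
      = ∏ k : Fin n, ∑ x ∈ s, f k x := (Finset.prod_univ_sum (fun _ : Fin n => s) f).symm
  have h1 : ∀ c : Fin n → γ, (∏ k : Fin n, f k (c k)) = g (c i) * h (c j) := by
    intro c
    rw [← Finset.mul_prod_erase univ _ (mem_univ i),
      ← Finset.mul_prod_erase _ _ (Finset.mem_erase.2 ⟨hij.symm, mem_univ j⟩)]
    have : ∀ k ∈ (univ.erase i).erase j, f k (c k) = 1 := by
      intro k hk
      have h1 := Finset.ne_of_mem_erase hk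
      have h2 := Finset.ne_of_mem_erase (Finset.mem_of_mem_erase hk)
      simp [hf, h1, h2]
    rw [Finset.prod_congr rfl this, Finset.prod_const_one]
    simp [hf, hij.symm]
  have h2 : (∏ k : Fin n, ∑ x ∈ s, f k x)
      = ((∑ x ∈ s, g x) * (∑ x ∈ s, h x)) * (s.card : ℝ) ^ (n - 2) := by
    rw [← Finset.mul_prod_erase univ _ (mem_univ i),
      ← Finset.mul_prod_erase _ _ (Finset.mem_erase.2 ⟨hij.symm, mem_univ j⟩)]
    have e1 : (∑ x ∈ s, f i x) = ∑ x ∈ s, g x := by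
      refine Finset.sum_congr rfl (fun x _ => ?_); simp [hf]
    have e2 : (∑ x ∈ s, f j x) = ∑ x ∈ s, h x := by
      refine Finset.sum_congr rfl (fun x _ => ?_); simp [hf, hij.symm]
    have e3 : (∏ k ∈ (univ.erase i).erase j, ∑ x ∈ s, f k x) = (s.card : ℝ) ^ (n - 2) := by
      have step : ∀ k ∈ (univ.erase i).erase j, (∑ x ∈ s, f k x) = (s.card : ℝ) := by
        intro k hk
        have hk1 := Finset.ne_of_mem_erase hk
        have hk2 := Finset.ne_of_mem_erase (Finset.mem_of_mem_erase hk)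
        rw [Finset.sum_congr rfl (fun x _ => ?_), Finset.sum_const, nsmul_eq_mul, mul_one]
        simp [hf, hk1, hk2]
      rw [Finset.prod_congr rfl step, Finset.prod_const,
        Finset.card_erase_of_mem (Finset.mem_erase.2 ⟨hij.symm, mem_univ j⟩),
        Finset.card_erase_of_mem (mem_univ i), card_univ, Fintype.card_fin]
      norm_num [Nat.sub_sub]
    rw [e1, e2, e3]; ring
  calc ∑ c ∈ Fintype.piFinset (fun _ : Fin n => s), g (c i) * h (c j)
      = ∑ c ∈ Fintype.piFinset (fun _ : Fin n => s), ∏ k : Fin n, f k (c k) :=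
        Finset.sum_congr rfl (fun c _ => (h1 c).symm)
    _ = _ := by rw [key, h2, mul_comm]

lemma merge_sum {n : ℕ} {γ : Type*} [DecidableEq γ] (s : Finset γ)
    (F : (Fin n → γ) → (Fin n → γ) → ℝ) :
    ∑ a ∈ Fintype.piFinset (fun _ : Fin n => s), ∑ b ∈ Fintype.piFinset (fun _ : Fin n => s),
        F a b
      = ∑ c ∈ Fintype.piFinset (fun _ : Fin n => s ×ˢ s),
          F (fun i => (c i).1) (fun i => (c i).2) := by
  rw [← Finset.sum_product']
  refine Finset.sum_nbij' (fun ab => fun i => (ab.1 i, ab.2 i))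
    (fun c => (fun i => (c i).1, fun i => (c i).2)) ?_ ?_ ?_ ?_ ?_
  · intro ab hab
    simp only [Finset.mem_product, Fintype.mem_piFinset] at hab ⊢
    intro i; exact ⟨hab.1 i, hab.2 i⟩
  · intro c hc
    simp only [Finset.mem_product, Fintype.mem_piFinset] at hc ⊢
    exact ⟨fun i => (hc i).1, fun i => (hc i).2⟩
  · intro ab _; rfl
  · intro c _; rfl
  · intro ab _; rfl

/-- The averaged fourth-order coefficient sum over pairs of integer tuples in `[−N,N]^{p−1}`
equals `(2/45)·N(N+1)(p−1)(10N²p + 4N² + 10Np + 4N − 3)`. -/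
theorem stmt10 (p N : ℕ) (hp : p.Prime) (hodd : Odd p) (hN : 0 < N) :
    (1 / ((2 * (N : ℝ) + 1)) ^ (2 * (p - 1))) *
      ∑ a ∈ Fintype.piFinset (fun _ : Fin (p - 1) => Finset.Icc (-(N : ℤ)) (N : ℤ)),
        ∑ b ∈ Fintype.piFinset (fun _ : Fin (p - 1) => Finset.Icc (-(N : ℤ)) (N : ℤ)),
          ∑ i : Fin (p - 1), ∑ j : Fin (p - 1),
            (((a i - b i : ℤ) : ℝ)) ^ 2 * (((a j - b j : ℤ) : ℝ)) ^ 2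
    = (2 / 45) * N * (N + 1) * ((p : ℝ) - 1) *
        (10 * N ^ 2 * p + 4 * N ^ 2 + 10 * N * p + 4 * N - 3) := by
  have hp3 : 3 ≤ p := by
    rcases hodd with ⟨k, hk⟩
    have := hp.two_le
    omega
  obtain ⟨m, hm⟩ : ∃ m, p - 1 = m + 2 := ⟨p - 3, by omega⟩
  set s : Finset ℤ := Finset.Icc (-(N:ℤ)) N with hs
  set P : Finset (ℤ × ℤ) := s ×ˢ s with hPdef
  set h : ℤ × ℤ → ℝ := fun z => (((z.1 - z.2 : ℤ)):ℝ)^2 with hh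
  set S2v : ℝ := 2*N*(N+1)*(2*N+1)^2/3 with hS2v
  set S4v : ℝ := 2*N*(N+1)*(2*N+1)^2*(8*N^2+8*N-1)/15 with hS4v
  have hcardP : (P.card : ℝ) = (2*(N:ℝ)+1)^2 := by
    rw [hPdef, Finset.card_product, hs, cardIcc]
    push_cast; ring
  -- inner computation for fixed i
  have inner : ∀ i : Fin (p-1),
      (∑ c ∈ Fintype.piFinset (fun _ : Fin (p-1) => P), ∑ j : Fin (p-1), h (c i) * h (c j))
      = (P.card:ℝ)^(p-1-1) * S4v + ((p-1-1 : ℕ):ℝ) * ((P.card:ℝ)^(p-1-2) * (S2v * S2v)) := by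
    intro i
    rw [Finset.sum_comm]
    rw [← Finset.add_sum_erase _ _ (mem_univ i)]
    congr 1
    · have e : ∀ c : Fin (p-1) → ℤ × ℤ,
          h (c i) * h (c i) = (fun z : ℤ × ℤ => (((z.1 - z.2 : ℤ)):ℝ)^4) (c i) := by
        intro c; simp only [hh]; ring
      rw [Finset.sum_congr rfl (fun c _ => e c),
        pi_single P (fun z : ℤ × ℤ => (((z.1 - z.2 : ℤ)):ℝ)^4) i]
      rw [hPdef, hs, sumP4, ← hS4v]
    · rw [Finset.sum_congr rfl
        (fun j hj => pi_pair P h h i j (Finset.ne_of_mem_erase hj).symm),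
        Finset.sum_const, Finset.card_erase_of_mem (mem_univ i), card_univ,
        Fintype.card_fin, nsmul_eq_mul]
      have hS2 : ∑ x ∈ P, h x = S2v := by rw [hPdef, hs, hh, hS2v]; exact sumP2 N
      rw [hS2]
  -- total sum
  have total :
      (∑ a ∈ Fintype.piFinset (fun _ : Fin (p - 1) => Finset.Icc (-(N : ℤ)) (N : ℤ)),
        ∑ b ∈ Fintype.piFinset (fun _ : Fin (p - 1) => Finset.Icc (-(N : ℤ)) (N : ℤ)),
          ∑ i : Fin (p - 1), ∑ j : Fin (p - 1),
            (((a i - b i : ℤ) : ℝ)) ^ 2 * (((a j - b j : ℤ) : ℝ)) ^ 2)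
      = ((p-1 : ℕ):ℝ) * ((P.card:ℝ)^(p-1-1) * S4v
          + ((p-1-1 : ℕ):ℝ) * ((P.card:ℝ)^(p-1-2) * (S2v * S2v))) := by
    rw [merge_sum s (fun a b => ∑ i : Fin (p-1), ∑ j : Fin (p-1),
      (((a i - b i : ℤ) : ℝ)) ^ 2 * (((a j - b j : ℤ) : ℝ)) ^ 2)]
    have e : ∀ c ∈ Fintype.piFinset (fun _ : Fin (p-1) => P),
        (∑ i : Fin (p-1), ∑ j : Fin (p-1),
          ((((fun i => (c i).1) i - (fun i => (c i).2) i : ℤ)):ℝ)^2 *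
          ((((fun i => (c i).1) j - (fun i => (c i).2) j : ℤ)):ℝ)^2)
        = ∑ i : Fin (p-1), ∑ j : Fin (p-1), h (c i) * h (c j) := by
      intro c _; rfl
    rw [Finset.sum_congr rfl e, Finset.sum_comm, Finset.sum_congr rfl (fun i _ => inner i),
      Finset.sum_const, card_univ, Fintype.card_fin, nsmul_eq_mul]
  rw [total, hcardP]
  have hp1 : p = m + 3 := by omega
  rw [hm, hp1, show m+2-1 = m+1 by omega, show m+2-2 = m by omega, hS2v, hS4v]
  have hq : (2*(N:ℝ)+1) ≠ 0 := by positivity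
  have pw : ∀ k : ℕ, ((2*(N:ℝ)+1)^2)^k = (2*(N:ℝ)+1)^(2*k) := fun k => (pow_mul _ 2 k).symm
  rw [pw, pw]
  have key : ∀ k : ℕ, (2*(N:ℝ)+1)^(2*(k+1)) = (2*(N:ℝ)+1)^(2*k) * (2*(N:ℝ)+1)^2 := by
    intro k; rw [← pow_add]; ring_nf
  rw [show 2*(m+2) = 2*(m+1)+2 by ring, pow_add, show 2*(m+1) = 2*m+2 by ring, pow_add]
  push_cast
  have hQ : (2*(N:ℝ)+1)^(2*m) ≠ 0 := pow_ne_zero _ hq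
  field_simp
  ring
end

section
/- The second moment of distances between points in B(p,N) is exactly M₂(p,N) = (2/3)(p³ − 2p² + 1)·N(N+1); equivalently, Σ_{α∈B(p,N)} Σ_{β∈B(p,N)} d(α,β)² = (2/3)(p³ − 2p² + 1)·N(N+1)·(2N+1)^{2p−2}. -/
/- ### Auxiliary combinatorial lemmas -/

lemma double_prod (n : ℕ) (I : Finset ℤ) (g : Fin n → ℤ → ℤ → ℝ) :
    ∑ a ∈ Fintype.piFinset (fun _ : Fin n => I), ∑ b ∈ Fintype.piFinset (fun _ : Fin n => I),
      ∏ k, g k (a k) (b k) = ∏ k, ∑ x ∈ I, ∑ y ∈ I, g k x y := by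
  rw [Finset.prod_univ_sum]
  refine Finset.sum_congr rfl fun a _ => ?_
  rw [Finset.prod_univ_sum]

lemma cross_zero (I : Finset ℤ) : ∑ x ∈ I, ∑ y ∈ I, ((x : ℝ) - y) = 0 := by
  have h : ∀ x ∈ I, ∑ y ∈ I, ((x:ℝ) - y) = (I.card : ℝ) * x - ∑ y ∈ I, (y:ℝ) := by
    intro x _
    rw [Finset.sum_sub_distrib, Finset.sum_const, nsmul_eq_mul]
  rw [Finset.sum_congr rfl h, Finset.sum_sub_distrib, Finset.sum_const, ← Finset.mul_sum,
    nsmul_eq_mul]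
  ring

lemma sq_sum (n : ℕ) (I : Finset ℤ) (i : Fin n) :
    ∑ a ∈ Fintype.piFinset (fun _ : Fin n => I), ∑ b ∈ Fintype.piFinset (fun _ : Fin n => I),
      ((a i : ℝ) - b i) ^ 2
      = (∑ x ∈ I, ∑ y ∈ I, ((x : ℝ) - y) ^ 2) * ((I.card : ℝ) ^ 2) ^ (n - 1) := by
  have h := double_prod n I (fun k x y => if k = i then ((x:ℝ) - y)^2 else 1)
  have hL : ∀ a b : Fin n → ℤ,
      (∏ k, if k = i then ((a k : ℝ) - b k)^2 else 1) = ((a i : ℝ) - b i)^2 := by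
    intro a b
    rw [Finset.prod_ite_eq' Finset.univ i (fun k => ((a k : ℝ) - b k)^2),
      if_pos (Finset.mem_univ i)]
  simp only [hL] at h
  rw [h, ← Finset.mul_prod_erase Finset.univ _ (Finset.mem_univ i)]
  congr 1
  · simp
  · have h2 : ∀ k ∈ Finset.univ.erase i,
        (∑ x ∈ I, ∑ y ∈ I, if k = i then ((x:ℝ) - y)^2 else 1) = (I.card : ℝ)^2 := by
      intro k hk
      simp only [if_neg (Finset.mem_erase.mp hk).1]
      simp [Finset.sum_const, sq]
    rw [Finset.prod_congr rfl h2, Finset.prod_const, Finset.card_erase_of_mem (Finset.mem_univ i),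
      Finset.card_univ, Fintype.card_fin]

lemma pair_sum (n : ℕ) (I : Finset ℤ) (i j : Fin n) (hij : i ≠ j) :
    ∑ a ∈ Fintype.piFinset (fun _ : Fin n => I), ∑ b ∈ Fintype.piFinset (fun _ : Fin n => I),
      ((a i : ℝ) - b i) * ((a j : ℝ) - b j) = 0 := by
  have h := double_prod n I (fun k x y =>
    if k = i then ((x:ℝ) - y) else if k = j then ((x:ℝ) - y) else 1)
  have hL : ∀ a b : Fin n → ℤ,
      (∏ k, if k = i then ((a k : ℝ) - b k) else if k = j then ((a k : ℝ) - b k) else 1)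
        = ((a i : ℝ) - b i) * ((a j : ℝ) - b j) := by
    intro a b
    rw [← Finset.mul_prod_erase Finset.univ _ (Finset.mem_univ i), if_pos rfl,
      ← Finset.mul_prod_erase _ _ (Finset.mem_erase.mpr ⟨hij.symm, Finset.mem_univ j⟩),
      if_neg hij.symm, if_pos rfl]
    rw [Finset.prod_eq_one, mul_one]
    intro k hk
    have h1 := (Finset.mem_erase.mp hk).1
    have h2 := (Finset.mem_erase.mp (Finset.mem_erase.mp hk).2).1
    rw [if_neg h2, if_neg h1]
  simp only [hL] at h
  rw [h]
  apply Finset.prod_eq_zero (Finset.mem_univ i)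
  simp only [if_pos rfl]
  exact cross_zero I

/- ### Sums over symmetric integer intervals -/

lemma Icc_succ (N : ℕ) : Finset.Icc (-(N+1 : ℤ)) (N+1) =
    insert (-(N+1 : ℤ)) (insert ((N:ℤ)+1) (Finset.Icc (-(N:ℤ)) N)) := by
  ext x
  simp only [Finset.mem_Icc, Finset.mem_insert]
  omega

lemma sum_Icc_zero (N : ℕ) : ∑ x ∈ Finset.Icc (-(N:ℤ)) N, (x:ℝ) = 0 := by
  induction N with
  | zero => simp
  | succ N ih =>
    have h1 : (-(N+1 : ℤ)) ∉ insert ((N:ℤ)+1) (Finset.Icc (-(N:ℤ)) N) := by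
      simp only [Finset.mem_insert, Finset.mem_Icc]; omega
    have h2 : ((N:ℤ)+1) ∉ Finset.Icc (-(N:ℤ)) N := by
      simp only [Finset.mem_Icc]; omega
    push_cast
    rw [Icc_succ, Finset.sum_insert h1, Finset.sum_insert h2, ih]
    push_cast
    ring

lemma sum_Icc_sq (N : ℕ) : ∑ x ∈ Finset.Icc (-(N:ℤ)) N, (x:ℝ)^2
    = N * (N+1) * (2*N+1) / 3 := by
  induction N with
  | zero => simp
  | succ N ih =>
    have h1 : (-(N+1 : ℤ)) ∉ insert ((N:ℤ)+1) (Finset.Icc (-(N:ℤ)) N) := by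
      simp only [Finset.mem_insert, Finset.mem_Icc]; omega
    have h2 : ((N:ℤ)+1) ∉ Finset.Icc (-(N:ℤ)) N := by
      simp only [Finset.mem_Icc]; omega
    push_cast
    rw [Icc_succ, Finset.sum_insert h1, Finset.sum_insert h2, ih]
    push_cast
    ring

lemma card_Icc_real (N : ℕ) : (((Finset.Icc (-(N:ℤ)) N).card : ℝ)) = 2*N+1 := by
  rw [Int.card_Icc]
  have : ((N:ℤ) + 1 - (-(N:ℤ))).toNat = 2*N+1 := by omega
  rw [this]
  push_cast; ring

lemma sq_cross (N : ℕ) : ∑ x ∈ Finset.Icc (-(N:ℤ)) N, ∑ y ∈ Finset.Icc (-(N:ℤ)) N,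
    ((x:ℝ) - y)^2 = 2/3 * N * (N+1) * (2*N+1)^2 := by
  have h : ∀ x ∈ Finset.Icc (-(N:ℤ)) N, ∑ y ∈ Finset.Icc (-(N:ℤ)) N, ((x:ℝ) - y)^2
      = ((Finset.Icc (-(N:ℤ)) N).card : ℝ) * (x:ℝ)^2
        - 2 * x * (∑ y ∈ Finset.Icc (-(N:ℤ)) N, (y:ℝ))
        + ∑ y ∈ Finset.Icc (-(N:ℤ)) N, (y:ℝ)^2 := by
    intro x _
    have : ∀ y ∈ Finset.Icc (-(N:ℤ)) N, ((x:ℝ) - y)^2 = (x:ℝ)^2 - 2*x*y + (y:ℝ)^2 :=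
      fun y _ => by ring
    rw [Finset.sum_congr rfl this, Finset.sum_add_distrib, Finset.sum_sub_distrib,
      Finset.sum_const, nsmul_eq_mul, ← Finset.mul_sum]
  rw [Finset.sum_congr rfl h, Finset.sum_add_distrib, Finset.sum_sub_distrib,
    Finset.sum_const, nsmul_eq_mul, sum_Icc_zero, sum_Icc_sq, card_Icc_real]
  have : ∀ x ∈ Finset.Icc (-(N:ℤ)) N, 2 * (x:ℝ) * 0 = 0 := fun x _ => by ring
  rw [Finset.sum_congr rfl this, Finset.sum_const]
  rw [← Finset.mul_sum, sum_Icc_sq]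
  rw [smul_zero]
  ring

/- ### Trace computations -/

lemma trace_pow_eq_neg_one (p : ℕ+) (hp : (p : ℕ).Prime)
    (K : Type*) [Field K] [Algebra ℚ K] [IsCyclotomicExtension {(p : ℕ)} ℚ K]
    (ω : K) (hω : IsPrimitiveRoot ω p) (k : ℕ) (hk : ¬ (p:ℕ) ∣ k) :
    Algebra.trace ℚ K (ω ^ k) = -1 := by
  haveI : Fact (p:ℕ).Prime := ⟨hp⟩
  haveI : CharZero K := charZero_of_injective_algebraMap (algebraMap ℚ K).injective
  have hcop : k.Coprime p := (Nat.coprime_comm.mp ((Nat.Prime.coprime_iff_not_dvd hp).mpr hk))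
  have hη : IsPrimitiveRoot (ω ^ k) (p:ℕ) := hω.pow_of_coprime k hcop
  have hmin := Polynomial.cyclotomic_eq_minpoly_rat hη p.pos
  have hgen : (hη.powerBasis ℚ).gen = ω ^ k := hη.powerBasis_gen ℚ
  have htr := (hη.powerBasis ℚ).trace_gen_eq_nextCoeff_minpoly
  rw [hgen] at htr
  have hnc : (Polynomial.cyclotomic (p:ℕ) ℚ).nextCoeff = 1 := by
    have h2 : 2 ≤ (p:ℕ) := hp.two_le
    rw [Polynomial.nextCoeff, Polynomial.natDegree_cyclotomic, Nat.totient_prime hp,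
      if_neg (by omega), Polynomial.cyclotomic_prime, Polynomial.finset_sum_coeff]
    simp only [Polynomial.coeff_X_pow]
    rw [Finset.sum_ite_eq (Finset.range p), if_pos (Finset.mem_range.mpr (by omega))]
  rw [Subsingleton.elim (DivisionRing.toRatAlgebra : Algebra ℚ K) ‹Algebra ℚ K›] at hmin
  rw [htr, ← hmin, hnc]

lemma trace_one_eq (p : ℕ+) (hp : (p : ℕ).Prime)
    (K : Type*) [Field K] [Algebra ℚ K] [IsCyclotomicExtension {(p : ℕ)} ℚ K] :
    Algebra.trace ℚ K 1 = ((p:ℕ) - 1 : ℕ) := by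
  have h1 : (1 : K) = algebraMap ℚ K 1 := by simp
  rw [h1, Algebra.trace_algebraMap,
    IsCyclotomicExtension.finrank K (Polynomial.cyclotomic.irreducible_rat p.pos),
    Nat.totient_prime hp]
  simp

lemma trace_key (p : ℕ+) (hp : (p : ℕ).Prime)
    (K : Type*) [Field K] [Algebra ℚ K] [IsCyclotomicExtension {(p : ℕ)} ℚ K]
    (ω : K) (hω : IsPrimitiveRoot ω p)
    (a : Fin ((p:ℕ) - 1) → ℤ) (j : ℕ) (hj1 : 1 ≤ j) (hj2 : j ≤ (p:ℕ) - 1) :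
    Algebra.trace ℚ K ((∑ i : Fin ((p:ℕ) - 1), (a i : K) * ω ^ ((i : ℕ) + 1)) * ω ^ j)
      = (p : ℚ) * a ⟨(p:ℕ) - 1 - j, by have := hp.two_le; omega⟩ - ∑ i, (a i : ℚ) := by
  have tr1 := trace_pow_eq_neg_one p hp K ω hω
  have tr0 := trace_one_eq p hp K
  have h2 := hp.two_le
  set i₀ : Fin ((p:ℕ) - 1) := ⟨(p:ℕ) - 1 - j, by omega⟩ with hi₀
  rw [Finset.sum_mul]
  have hterm : ∀ i : Fin ((p:ℕ) - 1), (a i : K) * ω ^ ((i : ℕ) + 1) * ω ^ j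
      = ((a i : ℚ)) • ω ^ ((i : ℕ) + 1 + j) := by
    intro i
    rw [Algebra.smul_def, map_intCast, pow_add ω ((i:ℕ)+1) j]
    ring
  rw [Finset.sum_congr rfl (fun i _ => hterm i), map_sum]
  have htr : ∀ i : Fin ((p:ℕ) - 1), Algebra.trace ℚ K ((a i : ℚ) • ω ^ ((i : ℕ) + 1 + j))
      = (a i : ℚ) * (if i = i₀ then ((p:ℚ) - 1) else -1) := by
    intro i
    rw [map_smul, smul_eq_mul]
    congr 1
    by_cases hi : i = i₀
    · subst hi
      have heq : (i₀ : ℕ) + 1 + j = (p:ℕ) := by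
        simp only [hi₀]
        omega
      rw [heq, hω.pow_eq_one, tr0, if_pos rfl]
      push_cast [Nat.cast_sub (by omega : 1 ≤ (p:ℕ))]
      norm_num
    · rw [if_neg hi]
      apply tr1
      have hlt : (i : ℕ) < (p:ℕ) - 1 := i.isLt
      have hne : (i : ℕ) ≠ (p:ℕ) - 1 - j := fun h => hi (Fin.ext (by simp [hi₀, h]))
      intro hdvd
      have hb : (i:ℕ) + 1 + j < 2 * (p:ℕ) := by omega
      have hpos : 0 < (i:ℕ) + 1 + j := by omega
      have : (i:ℕ) + 1 + j = (p:ℕ) := by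
        rcases hdvd with ⟨c, hc⟩
        have hc0 : c ≠ 0 := by rintro rfl; omega
        have hc1 : c < 2 := by
          by_contra hcon
          push_neg at hcon
          have := Nat.mul_le_mul_left (p:ℕ) hcon
          omega
        have : c = 1 := by omega
        rw [this, mul_one] at hc
        omega
      omega
  rw [Finset.sum_congr rfl (fun i _ => htr i)]
  have hsplit : ∀ i : Fin ((p:ℕ) - 1),
      (a i : ℚ) * (if i = i₀ then ((p:ℚ) - 1) else -1)
        = (if i = i₀ then (p:ℚ) * a i else 0) - (a i : ℚ) := by
    intro i; split <;> ring
  rw [Finset.sum_congr rfl (fun i _ => hsplit i), Finset.sum_sub_distrib,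
    Finset.sum_ite_eq' Finset.univ i₀ (fun i => (p:ℚ) * a i), if_pos (Finset.mem_univ i₀)]

/-- The second moment of distances:
`Σ_{α,β ∈ B(p,N)} d(α,β)² = (2/3)(p³ − 2p² + 1)·N(N+1)·(2N+1)^{2p−2}`. -/
theorem stmt11 (p : ℕ+) (hp : (p : ℕ).Prime) (hodd : Odd (p : ℕ))
    (K : Type*) [Field K] [Algebra ℚ K] [IsCyclotomicExtension {(p : ℕ)} ℚ K]
    (ω : K) (hω : IsPrimitiveRoot ω p) (N : ℕ) (hN : 0 < N) :
    ∑ α ∈ cycBox p ω N, ∑ β ∈ cycBox p ω N, (cycDist p ω α β) ^ 2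
      = (2 / 3) * ((p : ℝ) ^ 3 - 2 * (p : ℝ) ^ 2 + 1) * N * (N + 1) *
          (2 * (N : ℝ) + 1) ^ (2 * (p : ℕ) - 2) := by
  letI := Classical.decEq K
  have h2 : 2 ≤ (p:ℕ) := hp.two_le
  have h3 : 3 ≤ (p:ℕ) := by
    rcases hodd with ⟨m, hm⟩
    omega
  set n : ℕ := (p:ℕ) - 1 with hn
  set I : Finset ℤ := Finset.Icc (-(N:ℤ)) (N:ℤ) with hI
  set P : Finset (Fin n → ℤ) := Fintype.piFinset fun _ : Fin n => I with hP
  set f : (Fin n → ℤ) → K := fun a => ∑ i : Fin n, (a i : K) * ω ^ ((i : ℕ) + 1) with hf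
  -- the key trace formula, reindexed
  have key2 : ∀ (a : Fin n → ℤ) (i : Fin n),
      Algebra.trace ℚ K (f a * ω ^ (n - (i:ℕ)))
        = (p : ℚ) * a i - ∑ k, (a k : ℚ) := by
    intro a i
    have hi := i.isLt
    have h := trace_key p hp K ω hω a (n - (i:ℕ)) (by omega) (by omega)
    have hidx : (⟨(p:ℕ) - 1 - (n - (i:ℕ)), by omega⟩ : Fin ((p:ℕ) - 1)) = i :=
      Fin.ext (by simp only []; omega)
    rw [hidx] at h
    exact h
  -- the squared distance formula
  have dist_eq : ∀ a b : Fin n → ℤ, cycDist (↑p) ω (f a) (f b) ^ 2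
      = ∑ i : Fin n, ((p:ℝ) * ((a i : ℝ) - b i) - ∑ k, ((a k : ℝ) - (b k : ℝ))) ^ 2 := by
    intro a b
    have hsub : f a - f b = f (fun i => a i - b i) := by
      simp only [hf, ← Finset.sum_sub_distrib]
      refine Finset.sum_congr rfl fun i _ => ?_
      push_cast
      ring
    unfold cycDist cycNorm
    rw [hsub, Real.sq_sqrt (by positivity)]
    refine (Finset.sum_nbij (fun x : Fin n => n - (x:ℕ)) ?_ ?_ ?_ ?_).symm
    · intro x _
      have := x.isLt
      simp only [Finset.mem_Icc]
      omega
    · intro x _ y _ hxy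
      have hx := x.isLt
      have hy := y.isLt
      simp only [Set.mem_setOf_eq] at hxy
      exact Fin.ext (by omega)
    · intro j hj
      simp only [Finset.coe_Icc, Set.mem_Icc] at hj
      refine ⟨⟨n - j, by omega⟩, by simp, by simp; omega⟩
    · intro x _
      rw [key2 (fun i => a i - b i) x]
      push_cast
      ring
  -- injectivity of `f` (everywhere)
  have hinj : ∀ a ∈ P, ∀ b ∈ P, f a = f b → a = b := by
    intro a _ b _ hab
    have hkey : ∀ i : Fin n,
        (p:ℚ) * a i - ∑ k, (a k : ℚ) = (p:ℚ) * b i - ∑ k, (b k : ℚ) := by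
      intro i
      have := congrArg (fun x => Algebra.trace ℚ K (x * ω ^ (n - (i:ℕ)))) hab
      rw [key2 a i, key2 b i] at this
      exact this
    have hnq : ((n : ℕ) : ℚ) = (p:ℚ) - 1 := by
      rw [hn]
      push_cast [Nat.cast_sub (by omega : 1 ≤ (p:ℕ))]
      ring
    have hS : (∑ k, (a k : ℚ)) = ∑ k, (b k : ℚ) := by
      have h1 : ∑ i : Fin n, ((p:ℚ) * a i - ∑ k, (a k : ℚ))
          = ∑ i : Fin n, ((p:ℚ) * b i - ∑ k, (b k : ℚ)) :=
        Finset.sum_congr rfl fun i _ => hkey i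
      rw [Finset.sum_sub_distrib, Finset.sum_sub_distrib, ← Finset.mul_sum, ← Finset.mul_sum,
        Finset.sum_const, Finset.sum_const, Finset.card_univ, Fintype.card_fin,
        nsmul_eq_mul, nsmul_eq_mul, hnq] at h1
      linear_combination h1
    funext i
    have h := hkey i
    rw [hS] at h
    have hp0 : (p:ℚ) ≠ 0 := by
      have : (0:ℚ) < (p:ℚ) := by exact_mod_cast (by omega : 0 < (p:ℕ))
      exact this.ne'
    have : (a i : ℚ) = (b i : ℚ) := mul_left_cancel₀ hp0 (by linarith)
    exact_mod_cast this
  -- rewrite the double sum over boxes as a double sum over coefficient vectors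
  have hbox : cycBox (↑p) ω N = P.image f := rfl
  rw [hbox, Finset.sum_image hinj]
  rw [Finset.sum_congr rfl fun a _ => Finset.sum_image hinj]
  rw [Finset.sum_congr rfl fun a _ => Finset.sum_congr rfl fun b _ => dist_eq a b]
  -- expand the square
  have expand : ∀ a b : Fin n → ℤ,
      ∑ i : Fin n, ((p:ℝ) * ((a i : ℝ) - b i) - ∑ k, ((a k : ℝ) - (b k : ℝ))) ^ 2
        = (p:ℝ)^2 * (∑ i : Fin n, ((a i : ℝ) - b i)^2)
          + (((n:ℕ):ℝ) - 2*(p:ℝ)) * (∑ i : Fin n, ((a i : ℝ) - b i))^2 := by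
    intro a b
    have hpt : ∀ i : Fin n,
        ((p:ℝ) * ((a i : ℝ) - b i) - ∑ k, ((a k : ℝ) - (b k : ℝ))) ^ 2
          = (p:ℝ)^2 * ((a i : ℝ) - b i)^2
            - (2*(p:ℝ) * (∑ k, ((a k : ℝ) - (b k : ℝ)))) * ((a i : ℝ) - b i)
            + (∑ k, ((a k : ℝ) - (b k : ℝ)))^2 := fun i => by ring
    rw [Finset.sum_congr rfl fun i _ => hpt i, Finset.sum_add_distrib,
      Finset.sum_sub_distrib, ← Finset.mul_sum, ← Finset.mul_sum,
      Finset.sum_const, Finset.card_univ, Fintype.card_fin, nsmul_eq_mul]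
    ring
  rw [Finset.sum_congr rfl fun a _ => Finset.sum_congr rfl fun b _ => expand a b]
  -- split the big sum
  rw [Finset.sum_congr rfl fun a (_ : a ∈ P) => Finset.sum_add_distrib]
  rw [Finset.sum_add_distrib]
  simp_rw [← Finset.mul_sum]
  have hD : ∀ i : Fin n, ∑ a ∈ P, ∑ b ∈ P, ((a i : ℝ) - b i) ^ 2
      = (∑ x ∈ I, ∑ y ∈ I, ((x : ℝ) - y) ^ 2) * ((I.card : ℝ) ^ 2) ^ (n - 1) :=
    fun i => sq_sum n I i
  have hA : ∑ a ∈ P, ∑ b ∈ P, ∑ i : Fin n, ((a i : ℝ) - b i) ^ 2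
      = ((n:ℕ):ℝ) * ((∑ x ∈ I, ∑ y ∈ I, ((x : ℝ) - y) ^ 2) * ((I.card : ℝ) ^ 2) ^ (n - 1)) := by
    calc ∑ a ∈ P, ∑ b ∈ P, ∑ i : Fin n, ((a i : ℝ) - b i) ^ 2
        = ∑ a ∈ P, ∑ i : Fin n, ∑ b ∈ P, ((a i : ℝ) - b i) ^ 2 :=
          Finset.sum_congr rfl fun a _ => Finset.sum_comm
      _ = ∑ i : Fin n, ∑ a ∈ P, ∑ b ∈ P, ((a i : ℝ) - b i) ^ 2 := Finset.sum_comm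
      _ = ∑ _i : Fin n,
            ((∑ x ∈ I, ∑ y ∈ I, ((x : ℝ) - y) ^ 2) * ((I.card : ℝ) ^ 2) ^ (n - 1)) :=
          Finset.sum_congr rfl fun i _ => hD i
      _ = _ := by
          rw [Finset.sum_const, Finset.card_univ, Fintype.card_fin, nsmul_eq_mul]
  have hB : ∑ a ∈ P, ∑ b ∈ P, (∑ i : Fin n, ((a i : ℝ) - b i)) ^ 2
      = ((n:ℕ):ℝ) * ((∑ x ∈ I, ∑ y ∈ I, ((x : ℝ) - y) ^ 2) * ((I.card : ℝ) ^ 2) ^ (n - 1)) := by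
    have hsq : ∀ a b : Fin n → ℤ, (∑ i : Fin n, ((a i : ℝ) - b i)) ^ 2
        = ∑ i : Fin n, ∑ j : Fin n, ((a i : ℝ) - b i) * ((a j : ℝ) - b j) := by
      intro a b
      rw [sq, Finset.sum_mul_sum]
    rw [Finset.sum_congr rfl fun a (_ : a ∈ P) =>
      Finset.sum_congr rfl fun b (_ : b ∈ P) => hsq a b]
    have hcell : ∀ i j : Fin n, ∑ a ∈ P, ∑ b ∈ P, ((a i : ℝ) - b i) * ((a j : ℝ) - b j)
        = if i = j
          then (∑ x ∈ I, ∑ y ∈ I, ((x : ℝ) - y) ^ 2) * ((I.card : ℝ) ^ 2) ^ (n - 1)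
          else 0 := by
      intro i j
      by_cases hij : i = j
      · subst hij
        rw [if_pos rfl]
        simp_rw [← sq]
        exact sq_sum n I i
      · rw [if_neg hij]
        exact pair_sum n I i j hij
    calc ∑ a ∈ P, ∑ b ∈ P, ∑ i : Fin n, ∑ j : Fin n, ((a i : ℝ) - b i) * ((a j : ℝ) - b j)
        = ∑ a ∈ P, ∑ i : Fin n, ∑ b ∈ P, ∑ j : Fin n, ((a i : ℝ) - b i) * ((a j : ℝ) - b j) :=
          Finset.sum_congr rfl fun a _ => Finset.sum_comm
      _ = ∑ i : Fin n, ∑ a ∈ P, ∑ b ∈ P, ∑ j : Fin n, ((a i : ℝ) - b i) * ((a j : ℝ) - b j) :=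
          Finset.sum_comm
      _ = ∑ i : Fin n, ∑ a ∈ P, ∑ j : Fin n, ∑ b ∈ P, ((a i : ℝ) - b i) * ((a j : ℝ) - b j) :=
          Finset.sum_congr rfl fun i _ => Finset.sum_congr rfl fun a _ => Finset.sum_comm
      _ = ∑ i : Fin n, ∑ j : Fin n, ∑ a ∈ P, ∑ b ∈ P, ((a i : ℝ) - b i) * ((a j : ℝ) - b j) :=
          Finset.sum_congr rfl fun i _ => Finset.sum_comm
      _ = ∑ i : Fin n, ∑ j : Fin n, (if i = j
            then (∑ x ∈ I, ∑ y ∈ I, ((x : ℝ) - y) ^ 2) * ((I.card : ℝ) ^ 2) ^ (n - 1)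
            else 0) :=
          Finset.sum_congr rfl fun i _ => Finset.sum_congr rfl fun j _ => hcell i j
      _ = ∑ _i : Fin n,
            ((∑ x ∈ I, ∑ y ∈ I, ((x : ℝ) - y) ^ 2) * ((I.card : ℝ) ^ 2) ^ (n - 1)) :=
          Finset.sum_congr rfl fun i _ => Finset.sum_ite_eq Finset.univ i _ |>.trans
            (if_pos (Finset.mem_univ i))
      _ = _ := by
          rw [Finset.sum_const, Finset.card_univ, Fintype.card_fin, nsmul_eq_mul]
  rw [hA, hB, hI, sq_cross N, card_Icc_real N]
  have hnr : ((n:ℕ):ℝ) = (p:ℝ) - 1 := by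
    rw [hn, Nat.cast_sub (by omega : 1 ≤ (p:ℕ))]
    push_cast
    ring
  have hpow : (((2*(N:ℝ)+1)^2))^(n-1) = (2*(N:ℝ)+1)^(2*(n-1)) := (pow_mul _ 2 _).symm
  have hexp : (2*(N:ℝ)+1)^(2*(p:ℕ)-2) = ((2*(N:ℝ)+1)^2) * (2*(N:ℝ)+1)^(2*(n-1)) := by
    rw [← pow_add]
    congr 1
    omega
  rw [hpow, hexp, hnr]
  ring
end
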